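/- arXiv:hep-lat/9402020 — 6 statements merged into one kernel-verified Lean document; each statement's English description precedes it below -/
import Mathlib

section
/- The function F_HT(φ) = L^{1/(L^d−1)} · exp(−(L²−1)/(2γL^d) · φ²) is a fixed point of the hierarchical renormalization group transformation F'(φ) = ∫ dμ_γ(ζ) F(ζ + βφ)^{L^d} with β = L^{1−d/2}, where dμ_γ is the one-dimensional Gaussian measure with mean 0 and variance γ > 0. -/
open Real MeasureTheory

/-- The high-temperature Boltzmannian `F_HT` is a fixed point of the hierarchical
RG transformation `F'(φ) = ∫ dμ_γ(ζ) F(ζ + βφ)^(L^d)` with `β = L^(1-d/2)`. -/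
theorem stmt0 (d L γ : ℝ) (hd : 0 < d) (hL : 1 < L) (hγ : 0 < γ)
    (β : ℝ) (hβ : β = L ^ (1 - d / 2))
    (FHT : ℝ → ℝ)
    (hFHT : ∀ φ : ℝ, FHT φ =
      L ^ ((1 : ℝ) / (L ^ d - 1)) * exp (-((L ^ 2 - 1) / (2 * γ * L ^ d)) * φ ^ 2)) :
    ∀ φ : ℝ,
      (2 * π * γ) ^ (-(1 : ℝ) / 2) *
        ∫ ζ : ℝ, exp (-ζ ^ 2 / (2 * γ)) * (FHT (ζ + β * φ)) ^ (L ^ d)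
      = FHT φ := by
  intro φ
  have hL0 : (0 : ℝ) < L := lt_trans one_pos hL
  have hLd1 : (1 : ℝ) < L ^ d := (Real.one_lt_rpow_iff_of_pos hL0).2 (Or.inl ⟨hL, hd⟩)
  have hE0 : (0 : ℝ) < L ^ d := lt_trans one_pos hLd1
  have hE1 : L ^ d - 1 ≠ 0 := sub_ne_zero.2 (ne_of_gt hLd1)
  set E : ℝ := L ^ d with hE
  -- β² * E = L²
  have hβ2 : β ^ 2 * E = L ^ 2 := by
    rw [hβ, ← Real.rpow_natCast (L ^ (1 - d / 2)) 2, ← Real.rpow_mul hL0.le, hE,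
      ← Real.rpow_add hL0, ← Real.rpow_natCast L 2]
    congr 1
    push_cast
    ring
  -- pointwise computation of the integrand
  have key : ∀ ζ : ℝ, exp (-ζ ^ 2 / (2 * γ)) * (FHT (ζ + β * φ)) ^ E
      = (L ^ (E / (E - 1)) * exp (-((L ^ 2 - 1) / (2 * γ * E)) * φ ^ 2)) *
        exp (-(L ^ 2 / (2 * γ)) * (ζ + (L ^ 2 - 1) * β * φ / L ^ 2) ^ 2) := by
    intro ζ
    rw [hFHT]
    rw [Real.mul_rpow (Real.rpow_nonneg hL0.le _) (exp_pos _).le,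
      ← Real.rpow_mul hL0.le, ← Real.exp_mul]
    have h1 : (1 : ℝ) / (E - 1) * E = E / (E - 1) := by field_simp
    rw [h1]
    have h2 : -((L ^ 2 - 1) / (2 * γ * E)) * (ζ + β * φ) ^ 2 * E
        = -((L ^ 2 - 1) / (2 * γ)) * (ζ + β * φ) ^ 2 := by
      field_simp
    rw [h2, mul_left_comm, ← Real.exp_add, mul_assoc, ← Real.exp_add]
    congr 1
    apply congrArg
    have hγ' : (2 : ℝ) * γ ≠ 0 := by positivity
    have hL2 : (L : ℝ) ^ 2 ≠ 0 := by positivity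
    have hEne : E ≠ 0 := ne_of_gt hE0
    have hz : β ^ 2 * E - L ^ 2 = 0 := by rw [hβ2]; ring
    have h3 : 2 * γ * E * L ^ 2 *
        ((-ζ ^ 2 / (2 * γ) + -((L ^ 2 - 1) / (2 * γ)) * (ζ + β * φ) ^ 2) -
          (-((L ^ 2 - 1) / (2 * γ * E)) * φ ^ 2 +
            -(L ^ 2 / (2 * γ)) * (ζ + (L ^ 2 - 1) * β * φ / L ^ 2) ^ 2))
        = -(L ^ 2 - 1) * φ ^ 2 * (β ^ 2 * E - L ^ 2) := by
      field_simp
      ring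
    rw [hz, mul_zero] at h3
    have hne : (2 : ℝ) * γ * E * L ^ 2 ≠ 0 := by positivity
    have h4 := (mul_eq_zero.mp h3).resolve_left hne
    linarith [h4]
  rw [integral_congr_ae (Filter.Eventually.of_forall key)]
  rw [integral_const_mul, integral_add_right_eq_self
      (fun x => exp (-(L ^ 2 / (2 * γ)) * x ^ 2)) ((L ^ 2 - 1) * β * φ / L ^ 2),
    integral_gaussian]
  -- now pure algebra
  rw [hFHT]
  have hπ : (0 : ℝ) < 2 * π * γ := by positivity
  have hsqrt : √(π / (L ^ 2 / (2 * γ))) = √(2 * π * γ) / L := by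
    rw [show π / (L ^ 2 / (2 * γ)) = (2 * π * γ) / L ^ 2 by field_simp,
      Real.sqrt_div hπ.le, Real.sqrt_sq hL0.le]
  rw [hsqrt]
  have hrp : (2 * π * γ) ^ (-(1 : ℝ) / 2) = (√(2 * π * γ))⁻¹ := by
    rw [neg_div, Real.rpow_neg hπ.le, Real.sqrt_eq_rpow]
  have hsp : (0 : ℝ) < √(2 * π * γ) := Real.sqrt_pos.2 hπ
  have hLpow : L ^ (E / (E - 1)) / L = L ^ ((1 : ℝ) / (E - 1)) := by
    rw [show (1 : ℝ) / (E - 1) = E / (E - 1) - 1 by field_simp; ring,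
      Real.rpow_sub hL0, Real.rpow_one]
  rw [hrp, ← hLpow]
  field_simp
end

section
/- If F(φ) = F_HT(φ)·Z(φ) where F_HT is the high temperature fixed point, then F satisfies the RG transformation F'(φ) = ∫ dμ_γ(ζ) F(ζ+βφ)^{L^d} with β = L^{1−d/2} if and only if Z satisfies a transformation of the same type, Z'(φ) = ∫ dμ_{γ'}(ζ) Z(ζ+β'φ)^{L^d}, with modified parameters β' = L^{−1−d/2} and γ' = L^{−2}γ. -/
open Real MeasureTheory

/-- With `F = F_HT · Z`, the Boltzmannian `F` satisfies the hierarchical RG fixed point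
equation with parameters `(γ, β = L^(1-d/2))` iff `Z` satisfies the transformation of
the same type with modified parameters `β' = L^(-1-d/2)` and `γ' = L⁻² γ`. -/
theorem stmt2 (d L γ : ℝ) (hd : 0 < d) (hL : 1 < L) (hγ : 0 < γ)
    (Ld : ℕ) (hLd : (Ld : ℝ) = L ^ d)
    (Z : ℝ → ℝ) (hZmeas : Measurable Z)
    (FHT F : ℝ → ℝ)
    (hFHT : ∀ φ : ℝ, FHT φ =
      L ^ ((1 : ℝ) / (L ^ d - 1)) * exp (-((L ^ 2 - 1) / (2 * γ * L ^ d)) * φ ^ 2))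
    (hF : ∀ φ : ℝ, F φ = FHT φ * Z φ) :
    (∀ φ : ℝ, F φ = (2 * π * γ) ^ (-(1 : ℝ) / 2) *
        ∫ ζ : ℝ, exp (-ζ ^ 2 / (2 * γ)) * (F (ζ + L ^ (1 - d / 2) * φ)) ^ Ld)
    ↔ (∀ φ : ℝ, Z φ = (2 * π * (L ^ (-2 : ℝ) * γ)) ^ (-(1 : ℝ) / 2) *
        ∫ ζ : ℝ, exp (-ζ ^ 2 / (2 * (L ^ (-2 : ℝ) * γ))) *
          (Z (ζ + L ^ (-1 - d / 2) * φ)) ^ Ld) := by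
  have hL0 : (0:ℝ) < L := lt_trans one_pos hL
  have hLne : L ≠ 0 := ne_of_gt hL0
  have hp1 : 1 < L ^ d := (Real.one_lt_rpow_iff_of_pos hL0).mpr (Or.inl ⟨hL, hd⟩)
  have hp0 : (0:ℝ) < L ^ d := lt_trans one_pos hp1
  have hpne : L ^ d - 1 ≠ 0 := sub_ne_zero.mpr (ne_of_gt hp1)
  set p : ℝ := L ^ d with hpdef
  have hpne0 : p ≠ 0 := ne_of_gt hp0
  set β : ℝ := L ^ (1 - d/2) with hβdef
  set β' : ℝ := L ^ (-1 - d/2) with hβ'def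
  set γ' : ℝ := L ^ (-2:ℝ) * γ with hγ'def
  have hL2 : L ^ (-2:ℝ) = (L ^ 2)⁻¹ := by
    rw [Real.rpow_neg hL0.le, show ((2:ℝ)) = ((2:ℕ):ℝ) by norm_num,
      Real.rpow_natCast]
  have hγ'pos : 0 < γ' := mul_pos (Real.rpow_pos_of_pos hL0 _) hγ
  have hβ2 : β ^ 2 = L ^ 2 / p := by
    rw [hβdef, ← Real.rpow_natCast (L ^ (1 - d/2)) 2, ← Real.rpow_mul hL0.le, hpdef,
      show ((1:ℝ) - d/2) * (2:ℕ) = 2 - d by push_cast; ring, Real.rpow_sub hL0,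
      show ((2:ℝ)) = ((2:ℕ):ℝ) by norm_num, Real.rpow_natCast]
  have hβ' : β' = β / L ^ 2 := by
    rw [hβ'def, hβdef, eq_div_iff (by positivity), ← Real.rpow_natCast L 2,
      ← Real.rpow_add hL0]
    congr 1
    push_cast; ring
  set a : ℝ := β - β' with hadef
  have ha : a = β * (L ^ 2 - 1) / L ^ 2 := by
    rw [hadef, hβ']; field_simp
  -- polynomial identity (completing the square)
  have hpoly : ∀ ζ φ : ℝ, ζ^2 + (L^2-1)*(ζ+β*φ)^2
      = L^2*(ζ+a*φ)^2 + (L^2-1)*φ^2/p := by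
    have hβ2' : β^2 * p = L^2 := by field_simp at hβ2; linarith
    intro ζ φ
    rw [ha]
    field_simp
    linear_combination ((L^2-1)*φ^2) * hβ2'
  have hdiv : ∀ x : ℝ, x/(2*γ') = L^2 * x / (2*γ) := by
    intro x
    rw [hγ'def, hL2]
    field_simp
  -- exponent identity
  have hE : ∀ ζ φ : ℝ, -ζ^2/(2*γ) + (Ld:ℝ) * (-((L^2-1)/(2*γ*p)) * (ζ+β*φ)^2)
      = -(ζ+a*φ)^2/(2*γ') + (-((L^2-1)/(2*γ*p)) * φ^2) := by
    intro ζ φ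
    have hred : (Ld:ℝ) * (-((L^2-1)/(2*γ*p)) * (ζ+β*φ)^2)
        = -((L^2-1)/(2*γ)) * (ζ+β*φ)^2 := by
      rw [hLd]; field_simp
    rw [hred, hdiv]
    linear_combination (-(1:ℝ)/(2*γ)) * hpoly ζ φ
  -- constants
  have h2πγ : (0:ℝ) < 2 * π * γ := by positivity
  have hc1 : ((2:ℝ) * π * γ') ^ (-(1:ℝ)/2) = L * (2*π*γ) ^ (-(1:ℝ)/2) := by
    rw [hγ'def, show (2:ℝ)*π*(L ^ (-2:ℝ)*γ) = (2*π*γ) * L ^ (-2:ℝ) by ring,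
      Real.mul_rpow h2πγ.le (Real.rpow_pos_of_pos hL0 _).le,
      ← Real.rpow_mul hL0.le, show (-2:ℝ) * (-(1:ℝ)/2) = 1 by norm_num,
      Real.rpow_one]
    ring
  have hc2 : L ^ ((Ld:ℝ)/(p-1)) = L ^ ((1:ℝ)/(p-1)) * L := by
    rw [hLd, show p/(p-1) = 1/(p-1) + 1 by field_simp; ring, Real.rpow_add hL0,
      Real.rpow_one]
  -- integrand identity
  have hint : ∀ φ ζ : ℝ, exp (-ζ^2/(2*γ)) * (F (ζ + β*φ))^Ld
      = (L ^ ((Ld:ℝ)/(p-1)) * exp (-((L^2-1)/(2*γ*p)) * φ^2)) *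
        (exp (-(ζ+a*φ)^2/(2*γ')) * (Z ((ζ + a*φ) + β'*φ))^Ld) := by
    intro φ ζ
    have harg : (ζ + a*φ) + β'*φ = ζ + β*φ := by rw [hadef]; ring
    rw [harg, hF, hFHT, mul_pow, mul_pow]
    have h1 : (L ^ ((1:ℝ)/(p-1)))^Ld = L ^ ((Ld:ℝ)/(p-1)) := by
      rw [← Real.rpow_natCast (L ^ ((1:ℝ)/(p-1))) Ld, ← Real.rpow_mul hL0.le]
      congr 1; ring
    have h2 : (exp (-((L^2-1)/(2*γ*p)) * (ζ+β*φ)^2))^Ld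
        = exp ((Ld:ℝ) * (-((L^2-1)/(2*γ*p)) * (ζ+β*φ)^2)) := by
      rw [← Real.exp_nat_mul]
    rw [h1, h2]
    have := hE ζ φ
    calc exp (-ζ^2/(2*γ)) * (L ^ ((Ld:ℝ)/(p-1)) *
            exp ((Ld:ℝ) * (-((L^2-1)/(2*γ*p)) * (ζ+β*φ)^2)) * (Z (ζ+β*φ))^Ld)
        = L ^ ((Ld:ℝ)/(p-1)) * exp (-ζ^2/(2*γ) +
            (Ld:ℝ) * (-((L^2-1)/(2*γ*p)) * (ζ+β*φ)^2)) * (Z (ζ+β*φ))^Ld := by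
          rw [Real.exp_add]; ring
      _ = L ^ ((Ld:ℝ)/(p-1)) * exp (-(ζ+a*φ)^2/(2*γ') +
            (-((L^2-1)/(2*γ*p)) * φ^2)) * (Z (ζ+β*φ))^Ld := by rw [this]
      _ = _ := by rw [Real.exp_add]; ring
  -- the key pointwise relation between the two RG integrals
  have key : ∀ φ : ℝ, (2 * π * γ) ^ (-(1 : ℝ) / 2) *
        ∫ ζ : ℝ, exp (-ζ ^ 2 / (2 * γ)) * (F (ζ + β * φ)) ^ Ld
      = FHT φ * ((2 * π * γ') ^ (-(1 : ℝ) / 2) *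
        ∫ ζ : ℝ, exp (-ζ ^ 2 / (2 * γ')) * (Z (ζ + β' * φ)) ^ Ld) := by
    intro φ
    have hI : (∫ ζ : ℝ, exp (-ζ ^ 2 / (2 * γ)) * (F (ζ + β * φ)) ^ Ld)
        = (L ^ ((Ld:ℝ)/(p-1)) * exp (-((L^2-1)/(2*γ*p)) * φ^2)) *
          ∫ ζ : ℝ, exp (-ζ ^ 2 / (2 * γ')) * (Z (ζ + β' * φ)) ^ Ld := by
      have : (∫ ζ : ℝ, exp (-ζ ^ 2 / (2 * γ)) * (F (ζ + β * φ)) ^ Ld)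
          = ∫ ζ : ℝ, (L ^ ((Ld:ℝ)/(p-1)) * exp (-((L^2-1)/(2*γ*p)) * φ^2)) *
              (exp (-(ζ+a*φ)^2/(2*γ')) * (Z ((ζ + a*φ) + β'*φ))^Ld) := by
        congr 1; funext ζ; exact hint φ ζ
      rw [this, integral_const_mul]
      congr 1
      exact integral_add_right_eq_self
        (fun u => exp (-u ^ 2 / (2 * γ')) * (Z (u + β' * φ)) ^ Ld) (a * φ)
    rw [hI, hFHT, hc1, hc2]
    ring
  constructor
  · intro h φ
    have hne : FHT φ ≠ 0 := by rw [hFHT]; positivity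
    have h1 := h φ
    rw [key φ, hF φ] at h1
    exact mul_left_cancel₀ hne h1
  · intro h φ
    rw [hF φ, h φ, key φ]
end

section
/- Under the map P ↦ P', P'(φ) = ∫ dμ_{1/2}(ζ) P(ζ + β'φ)², if P(φ) = Σ_{l≥0} p_l φ^{2l}/(2^l √((2l)!)), then P'(φ) = Σ_l p'_l φ^{2l}/(2^l √((2l)!)) with p'_l = Σ_{m,n} S_l^{mn} p_m p_n, where S_l^{mn} = β'^{2l} (1/8)^{−l+m+n} (2(m+n))!/((m+n−l)! √((2l)!(2m)!(2n)!)) for 0 ≤ l ≤ m+n and S_l^{mn} = 0 otherwise. -/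
open Real MeasureTheory Finset

/-- The structure coefficients `S_l^{mn}` of the hierarchical RG in the
`p_l φ^{2l}/(2^l √((2l)!))` coordinates. -/
noncomputable def Scoef (β' : ℝ) (l m n : ℕ) : ℝ :=
  if l ≤ m + n then
    β' ^ (2 * l) * (1 / 8 : ℝ) ^ (m + n - l) * (Nat.factorial (2 * (m + n))) /
      ((Nat.factorial (m + n - l)) *
        Real.sqrt ((Nat.factorial (2 * l) : ℝ) * (Nat.factorial (2 * m)) *
          (Nat.factorial (2 * n))))
  else 0

lemma gauss_integrable (n : ℕ) : Integrable (fun x : ℝ => x ^ n * Real.exp (-x ^ 2)) := by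
  have h := integrable_rpow_mul_exp_neg_mul_sq (b := 1) one_pos
    (s := (n : ℝ)) (lt_of_lt_of_le neg_one_lt_zero (Nat.cast_nonneg n))
  simpa [Real.rpow_natCast, neg_mul, one_mul] using h

lemma gauss_expand (K : ℕ) (a : ℝ) :
    (fun x : ℝ => (x + a) ^ K * Real.exp (-x ^ 2))
      = fun x => ∑ j ∈ range (K + 1),
          (a ^ (K - j) * ((K.choose j) : ℝ)) * (x ^ j * Real.exp (-x ^ 2)) := by
  funext x
  rw [add_pow, Finset.sum_mul]
  exact Finset.sum_congr rfl fun j _ => by ring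

lemma gauss_shift_integrable (K : ℕ) (a : ℝ) :
    Integrable (fun x : ℝ => (x + a) ^ K * Real.exp (-x ^ 2)) := by
  rw [gauss_expand]
  exact integrable_finset_sum _ fun j _ => (gauss_integrable j).const_mul _

lemma integral_comp_neg_real (g : ℝ → ℝ) : (∫ x : ℝ, g (-x)) = ∫ x, g x :=
  (Measure.measurePreserving_neg _).integral_comp (MeasurableEquiv.neg ℝ).measurableEmbedding g

lemma moment_odd (k : ℕ) : (∫ x : ℝ, x ^ (2*k+1) * Real.exp (-x ^ 2)) = 0 := by
  have h := integral_comp_neg_real (fun x : ℝ => x ^ (2*k+1) * Real.exp (-x ^ 2))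
  have h2 : (∫ x : ℝ, (-x) ^ (2*k+1) * Real.exp (-(-x) ^ 2))
      = - ∫ x : ℝ, x ^ (2*k+1) * Real.exp (-x ^ 2) := by
    rw [← integral_neg]
    congr 1; funext x
    rw [Odd.neg_pow ⟨k, by ring⟩, neg_sq]; ring
  rw [h2] at h
  linarith

lemma moment_even (k : ℕ) : (∫ x : ℝ, x ^ (2*k) * Real.exp (-x ^ 2))
    = Real.sqrt π * (Nat.factorial (2*k)) / (4 ^ k * (Nat.factorial k)) := by
  induction k with
  | zero => simpa using integral_gaussian 1
  | succ k ih =>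
    have hf : ∀ x : ℝ, HasDerivAt (fun x : ℝ => x ^ (2*k+1) * Real.exp (-x ^ 2))
        ((2*k+1 : ℝ) * (x ^ (2*k) * Real.exp (-x ^ 2))
          - 2 * (x ^ (2*k+2) * Real.exp (-x ^ 2))) x := by
      intro x
      have h1 := hasDerivAt_pow (2*k+1) x
      have h2 : HasDerivAt (fun x : ℝ => -x ^ 2) (-(2*x)) x := by
        simpa using (hasDerivAt_pow 2 x).fun_neg
      have h3 := h2.exp
      refine (h1.fun_mul h3).congr_deriv ?_
      rw [Nat.add_sub_cancel]
      push_cast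
      ring
    have hzero := integral_eq_zero_of_hasDerivAt_of_integrable hf
      (((gauss_integrable (2*k)).const_mul _).sub ((gauss_integrable (2*k+2)).const_mul 2))
      (gauss_integrable (2*k+1))
    rw [integral_sub ((gauss_integrable (2*k)).const_mul _) ((gauss_integrable (2*k+2)).const_mul 2),
      integral_const_mul, integral_const_mul, ih] at hzero
    have h22 : 2*(k+1) = 2*k+2 := by ring
    rw [h22]
    have hfac : (Nat.factorial (2*k+2) : ℝ) = (2*k+2) * (2*k+1) * Nat.factorial (2*k) := by
      rw [show 2*k+2 = (2*k+1)+1 from rfl, Nat.factorial_succ, Nat.factorial_succ]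
      push_cast; ring
    have hfk : (Nat.factorial (k+1) : ℝ) = (k+1) * Nat.factorial k := by
      rw [Nat.factorial_succ]; push_cast; ring
    have h4 : (0:ℝ) < 4 ^ k * (Nat.factorial k) := by positivity
    rw [hfac, hfk]
    rw [pow_succ]
    have hz2 : (2*(k:ℝ)+1) * (Real.sqrt π * (Nat.factorial (2*k)))
        = 2 * (∫ x:ℝ, x^(2*k+2) * Real.exp (-x^2)) * (4^k * (Nat.factorial k)) := by
      field_simp at hzero
      linarith
    field_simp
    linear_combination (-2) * hz2

lemma sum_even_odd (F : ℕ → ℝ) (M : ℕ) :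
    ∑ j ∈ range (2*M+1), F j
      = (∑ k ∈ range (M+1), F (2*k)) + ∑ k ∈ range M, F (2*k+1) := by
  induction M with
  | zero => simp
  | succ M ih =>
    rw [show 2*(M+1)+1 = (2*M+1)+1+1 from by ring, Finset.sum_range_succ,
      Finset.sum_range_succ, ih, Finset.sum_range_succ (n := M+1),
      Finset.sum_range_succ (n := M)]
    rw [show 2*M+1+1 = 2*(M+1) from by ring]
    rw [Finset.sum_range_succ]
    ring

lemma gauss_shift_moment (M : ℕ) (a : ℝ) :
    (∫ x : ℝ, (x + a) ^ (2*M) * Real.exp (-x ^ 2))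
      = Real.sqrt π * ∑ l ∈ range (M+1),
          (Nat.factorial (2*M) : ℝ) * a ^ (2*l) /
            ((Nat.factorial (2*l)) * 4 ^ (M-l) * (Nat.factorial (M-l))) := by
  rw [gauss_expand, integral_finset_sum _ (fun j _ => ((gauss_integrable j).const_mul _))]
  simp only [integral_const_mul]
  rw [show 2*M+1 = 2*M+1 from rfl,
    sum_even_odd (fun j => (a ^ (2*M - j) * (((2*M).choose j) : ℝ)) *
      ∫ x : ℝ, x ^ j * Real.exp (-x ^ 2)) M]
  have hodd : (∑ k ∈ range M, (a ^ (2*M - (2*k+1)) * (((2*M).choose (2*k+1)) : ℝ)) *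
      ∫ x : ℝ, x ^ (2*k+1) * Real.exp (-x ^ 2)) = 0 := by
    refine Finset.sum_eq_zero fun k _ => ?_
    rw [moment_odd]; ring
  rw [hodd, add_zero, Finset.mul_sum,
    ← Finset.sum_range_reflect (fun k => (a ^ (2*M - 2*k) * (((2*M).choose (2*k)) : ℝ)) *
      ∫ x : ℝ, x ^ (2*k) * Real.exp (-x ^ 2)) (M+1)]
  refine Finset.sum_congr rfl fun l hl => ?_
  have hlM : l ≤ M := by simpa [Nat.lt_succ_iff] using hl
  rw [moment_even]
  have key : (((2*M).choose (2*(M+1-1-l))) * Nat.factorial (2*(M+1-1-l))) * Nat.factorial (2*l)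
      = Nat.factorial (2*M) := by
    have h := Nat.choose_mul_factorial_mul_factorial (show 2*(M+1-1-l) ≤ 2*M by omega)
    rw [show 2*M - 2*(M+1-1-l) = 2*l from by omega] at h
    linarith [h]
  have keyR : ((((2*M).choose (2*(M+1-1-l))) : ℝ) * Nat.factorial (2*(M+1-1-l))) * Nat.factorial (2*l)
      = Nat.factorial (2*M) := by exact_mod_cast key
  have hexp : 2*M - 2*(M+1-1-l) = 2*l := by omega
  have hsub : M + 1 - 1 - l = M - l := by omega
  rw [hexp]
  rw [hsub] at keyR ⊢
  have h1 : (0:ℝ) < Nat.factorial (2*l) := by positivity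
  have h2 : (0:ℝ) < (4:ℝ) ^ (M-l) * Nat.factorial (M-l) := by positivity
  field_simp
  linear_combination a^(2*l) * keyR

lemma term_id (β' φ u v : ℝ) (l m n : ℕ) (hl : l ≤ m + n) :
    (u / (2^m * Real.sqrt (Nat.factorial (2*m))) * (v / (2^n * Real.sqrt (Nat.factorial (2*n))))) *
      ((Nat.factorial (2*(m+n)) : ℝ) * (β'*φ) ^ (2*l) /
        ((Nat.factorial (2*l)) * 4 ^ ((m+n)-l) * (Nat.factorial ((m+n)-l))))
    = Scoef β' l m n * u * v * φ ^ (2*l) / (2^l * Real.sqrt (Nat.factorial (2*l))) := by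
  rw [Scoef, if_pos hl]
  have hsl : (0:ℝ) < Real.sqrt (Nat.factorial (2*l)) := Real.sqrt_pos.mpr (by positivity)
  have hsm : (0:ℝ) < Real.sqrt (Nat.factorial (2*m)) := Real.sqrt_pos.mpr (by positivity)
  have hsn : (0:ℝ) < Real.sqrt (Nat.factorial (2*n)) := Real.sqrt_pos.mpr (by positivity)
  have hmul : Real.sqrt ((Nat.factorial (2*l) : ℝ) * (Nat.factorial (2*m)) * (Nat.factorial (2*n)))
      = Real.sqrt (Nat.factorial (2*l)) * Real.sqrt (Nat.factorial (2*m)) *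
        Real.sqrt (Nat.factorial (2*n)) := by
    rw [Real.sqrt_mul (by positivity), Real.sqrt_mul (by positivity)]
  have hsq : Real.sqrt (Nat.factorial (2*l)) * Real.sqrt (Nat.factorial (2*l))
      = (Nat.factorial (2*l) : ℝ) := Real.mul_self_sqrt (by positivity)
  have hpow : (2:ℝ)^(m+n) * 4^(m+n-l) = 2^l * 8^(m+n-l) := by
    rw [show m+n = l + (m+n-l) from by omega, pow_add]
    rw [show l + (m+n-l) - l = m+n-l from by omega]
    rw [mul_assoc, ← mul_pow]; norm_num
  rw [hmul, mul_pow β' φ]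
  have h2mn : (2:ℝ)^m * 2^n = 2^(m+n) := by rw [← pow_add]
  field_simp
  rw [Real.sq_sqrt (by positivity : (0:ℝ) ≤ (Nat.factorial (2*l) : ℝ))]
  have hpow2 : (2:ℝ)^l * 8^(m+n-l) = 2^m * 2^n * 4^(m+n-l) := by
    rw [h2mn, hpow]
  have h8 : (8:ℝ)^(m+n-l) * (1/8)^(m+n-l) = 1 := by rw [← mul_pow]; norm_num
  linear_combination (u * v * β'^(2*l) * φ^(2*l) * (Nat.factorial (2*l) : ℝ) * (1/8:ℝ)^(m+n-l)) * hpow2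
    - (u * v * β'^(2*l) * φ^(2*l) * (Nat.factorial (2*l) : ℝ) * 2^l) * h8

/-- Under `P ↦ P'`, `P'(φ) = ∫ dμ_{1/2}(ζ) P(ζ + β'φ)²`, the coefficients of
`P(φ) = Σ_l p_l φ^{2l}/(2^l √((2l)!))` transform as `p'_l = Σ_{m,n} S_l^{mn} p_m p_n`. -/
theorem stmt3 (β' : ℝ) (hβ' : 0 < β') (N : ℕ) (p : ℕ → ℝ) (P : ℝ → ℝ)
    (hP : ∀ φ : ℝ, P φ = ∑ l ∈ range (N + 1),
      p l * φ ^ (2 * l) / (2 ^ l * Real.sqrt (Nat.factorial (2 * l)))) :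
    ∀ φ : ℝ,
      (2 * π * (1 / 2 : ℝ)) ^ (-(1 : ℝ) / 2) *
        ∫ ζ : ℝ, exp (-ζ ^ 2 / (2 * (1 / 2 : ℝ))) * (P (ζ + β' * φ)) ^ 2
      = ∑ l ∈ range (2 * N + 1),
          (∑ m ∈ range (N + 1), ∑ n ∈ range (N + 1), Scoef β' l m n * p m * p n) *
            φ ^ (2 * l) / (2 ^ l * Real.sqrt (Nat.factorial (2 * l))) := by
  intro φ
  have hnorm : (2 * π * (1/2 : ℝ)) ^ (-(1:ℝ)/2) = (Real.sqrt π)⁻¹ := by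
    rw [show 2 * π * (1/2 : ℝ) = π from by ring,
      show (-(1:ℝ)/2) = -(1/2 : ℝ) from by norm_num,
      Real.rpow_neg pi_pos.le, Real.sqrt_eq_rpow]
  set a : ℝ := β' * φ with ha
  set c : ℕ → ℝ := fun m => p m / (2 ^ m * Real.sqrt (Nat.factorial (2*m))) with hc
  have hPexp : ∀ y : ℝ, P y = ∑ m ∈ range (N+1), c m * y ^ (2*m) := by
    intro y; rw [hP]
    exact Finset.sum_congr rfl fun m _ => by rw [hc]; ring
  have hintg : (fun ζ : ℝ => Real.exp (-ζ^2 / (2*(1/2:ℝ))) * (P (ζ + a))^2)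
      = fun ζ => ∑ m ∈ range (N+1), ∑ n ∈ range (N+1),
          (c m * c n) * ((ζ + a) ^ (2*(m+n)) * Real.exp (-ζ^2)) := by
    funext ζ
    rw [show -ζ^2 / (2*(1/2:ℝ)) = -ζ^2 from by ring, hPexp (ζ + a),
      pow_two (∑ m ∈ range (N+1), c m * (ζ + a) ^ (2*m)), Finset.sum_mul_sum, Finset.mul_sum]
    refine Finset.sum_congr rfl fun m _ => ?_
    rw [Finset.mul_sum]
    refine Finset.sum_congr rfl fun n _ => ?_
    rw [show 2*(m+n) = 2*m + 2*n from by ring, pow_add]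
    ring
  have hI : (∫ ζ : ℝ, Real.exp (-ζ^2 / (2*(1/2:ℝ))) * (P (ζ + a))^2)
      = ∑ m ∈ range (N+1), ∑ n ∈ range (N+1), (c m * c n) *
          (Real.sqrt π * ∑ l ∈ range ((m+n)+1),
            (Nat.factorial (2*(m+n)) : ℝ) * a ^ (2*l) /
              ((Nat.factorial (2*l)) * 4 ^ ((m+n)-l) * (Nat.factorial ((m+n)-l)))) := by
    rw [hintg, integral_finset_sum _ (fun m _ => integrable_finset_sum _
      (fun n _ => ((gauss_shift_integrable (2*(m+n)) a).const_mul _)))]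
    refine Finset.sum_congr rfl fun m _ => ?_
    rw [integral_finset_sum _ (fun n _ => ((gauss_shift_integrable (2*(m+n)) a).const_mul _))]
    refine Finset.sum_congr rfl fun n _ => ?_
    rw [integral_const_mul, gauss_shift_moment (m+n) a]
  rw [hnorm, hI]
  have hπ : Real.sqrt π ≠ 0 := ne_of_gt (Real.sqrt_pos.mpr pi_pos)
  have hRHS : (∑ l ∈ range (2*N+1),
        (∑ m ∈ range (N+1), ∑ n ∈ range (N+1), Scoef β' l m n * p m * p n) *
          φ ^ (2*l) / (2^l * Real.sqrt (Nat.factorial (2*l))))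
      = ∑ m ∈ range (N+1), ∑ n ∈ range (N+1), ∑ l ∈ range (2*N+1),
          Scoef β' l m n * p m * p n * φ ^ (2*l) / (2^l * Real.sqrt (Nat.factorial (2*l))) := by
    simp only [Finset.sum_mul, Finset.sum_div]
    rw [Finset.sum_comm]
    exact Finset.sum_congr rfl fun m _ => Finset.sum_comm
  rw [hRHS, Finset.mul_sum]
  refine Finset.sum_congr rfl fun m hm => ?_
  rw [Finset.mul_sum]
  refine Finset.sum_congr rfl fun n hn => ?_
  have hmN : m ≤ N := by simpa [Nat.lt_succ_iff] using hm
  have hnN : n ≤ N := by simpa [Nat.lt_succ_iff] using hn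
  have hsub : range ((m+n)+1) ⊆ range (2*N+1) := by
    apply Finset.range_subset_range.mpr; omega
  have hzero : ∀ l ∈ range (2*N+1), l ∉ range ((m+n)+1) →
      Scoef β' l m n * p m * p n * φ ^ (2*l) / (2^l * Real.sqrt (Nat.factorial (2*l))) = 0 := by
    intro l _ hl
    have : ¬ (l ≤ m + n) := by simp only [Finset.mem_range] at hl; omega
    rw [Scoef, if_neg this]
    ring
  rw [← Finset.sum_subset hsub hzero]
  rw [show (Real.sqrt π)⁻¹ * ((c m * c n) * (Real.sqrt π * ∑ l ∈ range ((m+n)+1),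
        (Nat.factorial (2*(m+n)) : ℝ) * a ^ (2*l) /
          ((Nat.factorial (2*l)) * 4 ^ ((m+n)-l) * (Nat.factorial ((m+n)-l)))))
      = (c m * c n) * ∑ l ∈ range ((m+n)+1),
        (Nat.factorial (2*(m+n)) : ℝ) * a ^ (2*l) /
          ((Nat.factorial (2*l)) * 4 ^ ((m+n)-l) * (Nat.factorial ((m+n)-l)))
    from by field_simp]
  rw [Finset.mul_sum]
  refine Finset.sum_congr rfl fun l hl => ?_
  have hlmn : l ≤ m + n := by simpa [Nat.lt_succ_iff] using hl
  have := term_id β' φ (p m) (p n) l m n hlmn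
  rw [hc]
  simpa [ha] using this
end

section
/- Under the hierarchical RG transformation F ↦ F' with L^d = 2, F'(φ) = ∫ dμ_γ(ζ) F(ζ+βφ)², the coefficients of the expansion F(φ) = Σ_{l≥0} (a_l/γ̄^l) :φ^{2l}:_{γ̄} transform as a_l ↦ a'_l = β^{2l} Σ_{m,n} C_l^{mn} a_m a_n, where C_l^{mn} = (2m)!(2n)!/((m+n−l)!(l+n−m)!(l+m−n)!) and the sum is restricted to |m−n| ≤ l ≤ m+n. -/
open Real MeasureTheory Finset

/-- Physicists' Hermite polynomials: `H 0 = 1`, `H 1 x = 2x`,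
`H (n+2) x = 2x H (n+1) x - 2(n+1) H n x`. -/
noncomputable def hermiteP : ℕ → ℝ → ℝ
  | 0, _ => 1
  | 1, x => 2 * x
  | (n + 2), x => 2 * x * hermiteP (n + 1) x - 2 * (n + 1) * hermiteP n x

/-- Wick ordered power `:φ^n:_{γ̄} = (γ̄/2)^{n/2} H_n(φ/√(2γ̄))`. -/
noncomputable def wick (gb : ℝ) (n : ℕ) (φ : ℝ) : ℝ :=
  (gb / 2) ^ ((n : ℝ) / 2) * hermiteP n (φ / Real.sqrt (2 * gb))

/-- The structure coefficients `C_l^{mn}` of the Wick product expansion. -/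
noncomputable def Ccoef (l m n : ℕ) : ℝ :=
  if m ≤ n + l ∧ n ≤ m + l ∧ l ≤ m + n then
    (Nat.factorial (2 * m) : ℝ) * (Nat.factorial (2 * n)) /
      ((Nat.factorial (m + n - l)) * (Nat.factorial (l + n - m)) *
        (Nat.factorial (l + m - n)))
  else 0

namespace RG4


noncomputable def A (n k : ℕ) : ℝ :=
  if 2*k ≤ n then (Nat.factorial n : ℝ) / (Nat.factorial k * Nat.factorial (n - 2*k)) else 0

lemma A_pos_def {n k : ℕ} (h : 2*k ≤ n) :
    A n k = (Nat.factorial n : ℝ) / (Nat.factorial k * Nat.factorial (n - 2*k)) := if_pos h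

lemma A_eq_zero {n k : ℕ} (h : ¬ 2*k ≤ n) : A n k = 0 := by simp [A, h]

lemma Akey1 (j r : ℕ) : A (2*j+r+2) (j+1)
    = A (2*j+r+3) (j+1) - 2*((2*j+r+2 : ℕ) : ℝ) * A (2*j+r+1) j := by
  rw [A_pos_def (by omega), A_pos_def (by omega), A_pos_def (by omega)]
  rw [show 2*j+r+2 - 2*(j+1) = r by omega, show 2*j+r+3 - 2*(j+1) = r+1 by omega,
    show 2*j+r+1 - 2*j = r+1 by omega]
  rw [show 2*j+r+3 = (2*j+r+2)+1 by omega, Nat.factorial_succ (2*j+r+2),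
    show 2*j+r+2 = (2*j+r+1)+1 by omega, Nat.factorial_succ (2*j+r+1),
    Nat.factorial_succ r, Nat.factorial_succ j]
  have h1 : (Nat.factorial (2*j+r+1) : ℝ) ≠ 0 := Nat.cast_ne_zero.2 (Nat.factorial_ne_zero _)
  have h2 : (Nat.factorial r : ℝ) ≠ 0 := Nat.cast_ne_zero.2 (Nat.factorial_ne_zero _)
  have h3 : (Nat.factorial j : ℝ) ≠ 0 := Nat.cast_ne_zero.2 (Nat.factorial_ne_zero _)
  push_cast
  field_simp
  ring

lemma Akey2 (j : ℕ) : A (2*j+2) (j+1) = 2*((2*j+1 : ℕ) : ℝ) * A (2*j) j := by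
  rw [A_pos_def (by omega), A_pos_def (by omega)]
  rw [show 2*j+2 - 2*(j+1) = 0 by omega, show 2*j - 2*j = 0 by omega]
  rw [show 2*j+2 = (2*j+1)+1 by omega, Nat.factorial_succ (2*j+1),
    show 2*j+1 = (2*j)+1 by omega, Nat.factorial_succ (2*j), Nat.factorial_succ j]
  have h1 : (Nat.factorial (2*j) : ℝ) ≠ 0 := Nat.cast_ne_zero.2 (Nat.factorial_ne_zero _)
  have h3 : (Nat.factorial j : ℝ) ≠ 0 := Nat.cast_ne_zero.2 (Nat.factorial_ne_zero _)
  push_cast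
  field_simp
  ring

lemma A_zero_left (n : ℕ) : A n 0 = 1 := by
  have : (Nat.factorial n : ℝ) ≠ 0 := Nat.cast_ne_zero.2 n.factorial_ne_zero
  rw [A_pos_def (by omega)]; simp [this]


noncomputable def W (c : ℝ) (n : ℕ) (x : ℝ) : ℝ :=
  ∑ k ∈ range (n+1), (-(c/2))^k * A n k * x^(n - 2*k)

lemma W_zero (c x : ℝ) : W c 0 x = 1 := by simp [W, A_zero_left]

lemma W_mul_X (c x : ℝ) (n : ℕ) :
    x * W c n x = W c (n+1) x + (n : ℝ) * c * W c (n - 1) x := by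
  rcases n with _ | m
  · simp only [Nat.cast_zero, zero_mul, zero_add, add_zero, W_zero, mul_one]
    rw [W, Finset.sum_range_succ, Finset.sum_range_one, A_zero_left,
      A_eq_zero (n := 1) (k := 1) (by omega)]
    simp
  · simp only [Nat.cast_succ, Nat.add_sub_cancel]
    calc x * W c (m+1) x
        = ∑ k ∈ range (m+3), (-(c/2))^k * A (m+1) k * x^((m+1) - 2*k + 1) := by
          rw [Finset.sum_range_succ, A_eq_zero (n := m+1) (k := m+2) (by omega), W,
            Finset.mul_sum]
          simp only [mul_zero, zero_mul, add_zero]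
          apply Finset.sum_congr rfl
          intro k hk
          rw [pow_succ]
          ring
      _ = ∑ k ∈ range (m+3), ((-(c/2))^k * A (m+2) k * x^((m+2) - 2*k)
            + (if k = 0 then 0 else
                ((m:ℝ)+1)*c*((-(c/2))^(k-1) * A m (k-1) * x^(m-2*(k-1))))) := by
          apply Finset.sum_congr rfl
          intro k _
          rcases k with _ | j
          · simp [A_zero_left]
          · simp only [Nat.succ_ne_zero, if_false, Nat.add_sub_cancel]
            by_cases h1 : 2*(j+1) ≤ m+1
            · obtain ⟨r, rfl⟩ : ∃ r, m = 2*j + r + 1 := ⟨m - 2*j - 1, by omega⟩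
              rw [show 2*j+r+1+1 = 2*j+r+2 by omega, show 2*j+r+1+2 = 2*j+r+3 by omega,
                Akey1 j r]
              rw [show 2*j+r+2 - 2*(j+1) + 1 = r + 1 by omega,
                show 2*j+r+3 - 2*(j+1) = r + 1 by omega,
                show 2*j+r+1 - 2*j = r + 1 by omega]
              push_cast
              rw [pow_succ (-(c/2)) j]
              ring
            · by_cases h2 : 2*(j+1) = m+2
              · obtain ⟨rfl⟩ : m = 2*j := by omega
                rw [A_eq_zero (by omega), Akey2 j,
                  show 2*j+2 - 2*(j+1) = 0 by omega, show 2*j - 2*j = 0 by omega]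
                push_cast
                rw [pow_succ (-(c/2)) j]
                ring
              · rw [A_eq_zero (n := m+1) (by omega), A_eq_zero (n := m+2) (by omega),
                  A_eq_zero (n := m) (k := j) (by omega)]
                ring
      _ = W c (m+2) x + ((m:ℝ)+1) * c * W c m x := by
          rw [Finset.sum_add_distrib]
          congr 1
          rw [Finset.sum_range_succ' _ (m+2)]
          simp only [Nat.succ_ne_zero, if_false, Nat.add_sub_cancel, reduceIte, add_zero]
          rw [W, Finset.mul_sum, Finset.sum_range_succ,
            A_eq_zero (n := m) (k := m+1) (by omega)]
          simp only [mul_zero, zero_mul, add_zero]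

lemma W_rec (c x : ℝ) (n : ℕ) :
    W c (n+2) x = x * W c (n+1) x - ((n:ℝ)+1) * c * W c n x := by
  have := W_mul_X c x (n+1)
  simp only [Nat.add_sub_cancel] at this
  push_cast at this
  linarith


lemma Dkey (p q i : ℕ) :
    (((i+1).factorial : ℝ)) * ((p+2).choose (i+1)) * (q.choose (i+1))
    = ((i+1).factorial : ℝ) * ((p+1).choose (i+1)) * (q.choose (i+1))
      + ((p+1+q-2*i : ℕ) : ℝ) * (i.factorial) * ((p+1).choose i) * (q.choose i)
      - ((p:ℝ)+1) * (i.factorial) * (p.choose i) * (q.choose i) := by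
  by_cases hq : i ≤ q
  · by_cases hp : i ≤ p + 1
    · -- main case
      have c1 : ((p+2).choose (i+1) : ℝ) = ((p+1).choose (i+1) : ℝ) + ((p+1).choose i : ℝ) := by
        rw [show p+2 = (p+1)+1 from rfl, Nat.choose_succ_succ (p+1) i]
        push_cast; ring
      have c2 : ((p:ℝ)+1) * (p.choose i) = (((p+1-i : ℕ)) : ℝ) * ((p+1).choose i) := by
        have h1 : (p+1) * p.choose i = (p+1).choose (i+1) * (i+1) := Nat.add_one_mul_choose_eq p i
        have h2 : (p+1).choose (i+1) * (i+1) = (p+1).choose i * (p+1-i) :=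
          Nat.choose_succ_right_eq (p+1) i
        have h3 := congrArg (Nat.cast (R := ℝ)) (h1.trans h2)
        push_cast [Nat.cast_sub hp] at h3 ⊢
        linarith [h3]
      have c3 : ((i:ℝ)+1) * (q.choose (i+1)) = (((q-i : ℕ)) : ℝ) * (q.choose i) := by
        have h2 : q.choose (i+1) * (i+1) = q.choose i * (q-i) := Nat.choose_succ_right_eq q i
        have h3 := congrArg (Nat.cast (R := ℝ)) h2
        push_cast [Nat.cast_sub hq] at h3 ⊢
        linarith [h3]
      have hcq : ((q-i : ℕ) : ℝ) = (q:ℝ) - i := by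
        rw [Nat.cast_sub hq]
      have hcp : ((p+1-i : ℕ) : ℝ) = (p:ℝ)+1 - i := by
        rw [Nat.cast_sub hp]; push_cast; ring
      have hcpq : ((p+1+q-2*i : ℕ) : ℝ) = (p:ℝ)+1+q - 2*i := by
        rw [Nat.cast_sub (by omega)]; push_cast; ring
      have hfac : (((i+1).factorial : ℕ) : ℝ) = ((i:ℝ)+1) * (i.factorial : ℝ) := by
        rw [Nat.factorial_succ]; push_cast; ring
      rw [hfac, c1, hcpq] at *
      rw [hcq] at c3
      rw [hcp] at c2
      linear_combination ((i.factorial : ℝ) * ((p+1).choose i : ℝ)) * c3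
        + ((i.factorial : ℝ) * (q.choose i : ℝ)) * c2
    · -- i > p+1 : all terms vanish
      push_neg at hp
      rw [Nat.choose_eq_zero_of_lt (by omega : p+2 < i+1),
        Nat.choose_eq_zero_of_lt (by omega : p+1 < i+1),
        Nat.choose_eq_zero_of_lt (by omega : p+1 < i),
        Nat.choose_eq_zero_of_lt (by omega : p < i)]
      push_cast; ring
  · push_neg at hq
    rw [Nat.choose_eq_zero_of_lt (show q < i+1 by omega),
      Nat.choose_eq_zero_of_lt (show q < i by omega)]
    push_cast; ring

lemma W_one (c x : ℝ) : W c 1 x = x := by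
  rw [W]
  rw [show (1+1) = 2 from rfl, Finset.sum_range_succ, Finset.sum_range_one]
  rw [A_zero_left, A_eq_zero (by omega)]
  simp

/-- coefficient in the Wick product formula -/
noncomputable def D (q P k : ℕ) : ℝ :=
  (Nat.factorial k : ℝ) * (P.choose k) * (q.choose k)

lemma W_prod (c x : ℝ) (q : ℕ) : ∀ p : ℕ, W c p x * W c q x
    = ∑ k ∈ range (p+1), D q p k * c^k * W c (p+q-2*k) x := by
  have main : ∀ p : ℕ, (W c p x * W c q x
      = ∑ k ∈ range (p+1), D q p k * c^k * W c (p+q-2*k) x) ∧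
      (W c (p+1) x * W c q x
      = ∑ k ∈ range (p+2), D q (p+1) k * c^k * W c (p+1+q-2*k) x) := by
    intro p
    induction p with
    | zero =>
      constructor
      · simp [W_zero, D]
      · rw [W_one, W_mul_X c x q]
        rw [show (0+2) = 2 from rfl, Finset.sum_range_succ, Finset.sum_range_one]
        simp only [D, Nat.factorial_zero, Nat.factorial_one, Nat.choose_zero_right,
          Nat.choose_one_right, Nat.choose_self]
        push_cast
        rw [show 0+1+q-2*0 = q+1 by omega, show 0+1+q-2*1 = q-1 by omega]
        ring
    | succ p ih =>
      obtain ⟨ih0, ih1⟩ := ih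
      refine ⟨ih1, ?_⟩
      have step : W c (p+1+1) x * W c q x
          = ∑ k ∈ range (p+3), ((D q (p+1) k * c^k * W c ((p+1+q-2*k)+1) x
              + (if k = 0 then 0 else
                  D q (p+1) (k-1) * ((p+1+q-2*(k-1) : ℕ) : ℝ) * c^k * W c (p+1+q-2*(k-1)-1) x))
              - (if k = 0 then 0 else ((p:ℝ)+1) * D q p (k-1) * c^k * W c (p+q-2*(k-1)) x)) := by
        have start : W c (p+1+1) x * W c q x
            = x * (W c (p+1) x * W c q x) - ((p:ℝ)+1)*c*(W c p x * W c q x) := by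
          rw [show p+1+1 = p+2 from rfl, W_rec c x p]; ring
        rw [start, ih1, ih0, Finset.mul_sum, Finset.mul_sum, Finset.sum_sub_distrib]
        congr 1
        · -- x * first sum  = sum of T1 + T2
          rw [Finset.sum_add_distrib]
          have e1 : ∑ k ∈ range (p+3), D q (p+1) k * c^k * W c ((p+1+q-2*k)+1) x
              = ∑ k ∈ range (p+2), D q (p+1) k * c^k * W c ((p+1+q-2*k)+1) x := by
            rw [Finset.sum_range_succ]
            have : D q (p+1) (p+2) = 0 := by
              simp [D, Nat.choose_eq_zero_of_lt (show p+1 < p+2 by omega)]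
            rw [this]; ring
          have e2 : ∑ k ∈ range (p+3), (if k = 0 then 0 else
                D q (p+1) (k-1) * ((p+1+q-2*(k-1) : ℕ) : ℝ) * c^k * W c (p+1+q-2*(k-1)-1) x)
              = ∑ k ∈ range (p+2),
                D q (p+1) k * ((p+1+q-2*k : ℕ) : ℝ) * c^(k+1) * W c (p+1+q-2*k-1) x := by
            rw [Finset.sum_range_succ' _ (p+2)]
            simp only [Nat.succ_ne_zero, if_false, Nat.add_sub_cancel, reduceIte, add_zero]
          rw [e1, e2]
          rw [← Finset.sum_add_distrib]
          apply Finset.sum_congr rfl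
          intro k _
          have hw := W_mul_X c x (p+1+q-2*k)
          linear_combination (D q (p+1) k * c^k) * hw
        · -- second
          have e3 : ∑ k ∈ range (p+3), (if k = 0 then 0 else
                ((p:ℝ)+1) * D q p (k-1) * c^k * W c (p+q-2*(k-1)) x)
              = ∑ k ∈ range (p+2), ((p:ℝ)+1) * D q p k * c^(k+1) * W c (p+q-2*k) x := by
            rw [Finset.sum_range_succ' _ (p+2)]
            simp only [Nat.succ_ne_zero, if_false, Nat.add_sub_cancel, reduceIte, add_zero]
          have e4 : ∑ k ∈ range (p+2), ((p:ℝ)+1) * D q p k * c^(k+1) * W c (p+q-2*k) x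
              = ∑ k ∈ range (p+1), ((p:ℝ)+1) * D q p k * c^(k+1) * W c (p+q-2*k) x := by
            rw [Finset.sum_range_succ]
            have : D q p (p+1) = 0 := by
              simp [D, Nat.choose_eq_zero_of_lt (show p < p+1 by omega)]
            rw [this]; ring
          rw [e3, e4]
          apply Finset.sum_congr rfl
          intro k _
          ring
      rw [step]
      apply Finset.sum_congr rfl
      intro k _
      rcases k with _ | i
      · simp only [reduceIte, sub_zero, add_zero, D]
        rw [show p+1+q-2*0+1 = p+1+1+q-2*0 by omega]
        norm_num
      · simp only [Nat.succ_ne_zero, if_false, Nat.add_sub_cancel]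
        rw [show p+1+1 = p+2 from rfl]
        by_cases hi : 2*(i+1) ≤ p+1+q
        · rw [show (p+1+q-2*(i+1))+1 = p+q-2*i by omega,
            show p+1+q-2*i-1 = p+q-2*i by omega,
            show p+2+q-2*(i+1) = p+q-2*i by omega]
          have hd := Dkey p q i
          simp only [D]
          push_cast
          push_cast at hd
          linear_combination (-(c^(i+1) * W c (p+q-2*i) x)) * hd
        · by_cases hi2 : 2*i ≤ p+q
          · -- 2*i = p+q exactly
            have hz : ((q.choose (i+1) : ℕ) : ℝ) * ((p+1).choose (i+1)) = 0 := by
              rcases le_or_gt (i+1) q with h | h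
              · rw [Nat.choose_eq_zero_of_lt (show p+1 < i+1 by omega)]
                ring
              · rw [Nat.choose_eq_zero_of_lt (show q < i+1 by omega)]
                ring
            rw [show p+1+q-2*i-1 = 0 by omega, show p+q-2*i = 0 by omega,
              show p+2+q-2*(i+1) = 0 by omega, show (p+1+q-2*(i+1))+1 = 1 by omega]
            have hd := Dkey p q i
            simp only [D]
            push_cast
            push_cast at hd hz
            linear_combination (-(c^(i+1) * W c 0 x)) * hd
              + (c^(i+1) * (((i+1).factorial : ℝ)) *
                  (W c 1 x - W c 0 x)) * hz
          · -- 2*i > p+q : every coefficient vanishes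
            have h1 : D q (p+1) (i+1) = 0 := by
              rcases le_or_gt (i+1) q with h | h
              · simp [D, Nat.choose_eq_zero_of_lt (show p+1 < i+1 by omega)]
              · simp [D, Nat.choose_eq_zero_of_lt (show q < i+1 by omega)]
            have h4 : D q (p+2) (i+1) = 0 := by
              rcases le_or_gt (i+1) q with h | h
              · simp [D, Nat.choose_eq_zero_of_lt (show p+2 < i+1 by omega)]
              · simp [D, Nat.choose_eq_zero_of_lt (show q < i+1 by omega)]
            have h3 : D q p i = 0 := by
              rcases le_or_gt i q with h | h
              · simp [D, Nat.choose_eq_zero_of_lt (show p < i by omega)]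
              · simp [D, Nat.choose_eq_zero_of_lt (show q < i by omega)]
            have h2 : D q (p+1) i * ((p+1+q-2*i : ℕ) : ℝ) = 0 := by
              by_cases h : 2*i = p+q+1
              · rw [show p+1+q-2*i = 0 by omega]
                simp
              · rcases le_or_gt i q with hh | hh
                · simp [D, Nat.choose_eq_zero_of_lt (show p+1 < i by omega)]
                · simp [D, Nat.choose_eq_zero_of_lt (show q < i by omega)]
            rw [h4, h1]
            rw [show D q (p+1) i * ((p+1+q-2*i : ℕ) : ℝ) * c^(i+1) * W c (p+1+q-2*i-1) x
              = (D q (p+1) i * ((p+1+q-2*i : ℕ) : ℝ)) * (c^(i+1) * W c (p+1+q-2*i-1) x) by ring,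
              h2, h3]
            ring
  exact fun p => (main p).1

lemma sqrt_half_mul {g : ℝ} (hg : 0 < g) (φ : ℝ) :
    Real.sqrt (g/2) * (2 * (φ / Real.sqrt (2*g))) = φ := by
  have h1 : Real.sqrt (2*g) ≠ 0 := ne_of_gt (Real.sqrt_pos.2 (by linarith))
  have h4 : Real.sqrt 4 = 2 := by
    rw [show (4:ℝ) = 2^2 by norm_num, Real.sqrt_sq (by norm_num : (0:ℝ) ≤ 2)]
  have h2 : Real.sqrt (g/2) * 2 = Real.sqrt (2*g) := by
    calc Real.sqrt (g/2) * 2 = Real.sqrt (g/2) * Real.sqrt 4 := by rw [h4]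
      _ = Real.sqrt (g/2*4) := (Real.sqrt_mul (by linarith : (0:ℝ) ≤ g/2) 4).symm
      _ = Real.sqrt (2*g) := by rw [show g/2*4 = 2*g by ring]
  rw [show Real.sqrt (g/2) * (2 * (φ / Real.sqrt (2*g)))
      = (Real.sqrt (g/2) * 2) * (φ / Real.sqrt (2*g)) by ring, h2]
  field_simp

lemma wick_zero (g φ : ℝ) : wick g 0 φ = 1 := by
  simp [wick, hermiteP]

lemma wick_one {g : ℝ} (hg : 0 < g) (φ : ℝ) : wick g 1 φ = φ := by
  rw [wick]
  have : ((1:ℕ):ℝ)/2 = (1:ℝ)/2 := by norm_num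
  rw [this, show hermiteP 1 (φ / Real.sqrt (2*g)) = 2 * (φ / Real.sqrt (2*g)) from rfl]
  rw [← Real.sqrt_eq_rpow]
  exact sqrt_half_mul hg φ

lemma wick_rec {g : ℝ} (hg : 0 < g) (n : ℕ) (φ : ℝ) :
    wick g (n+2) φ = φ * wick g (n+1) φ - ((n:ℝ)+1) * g * wick g n φ := by
  have h2 : (0:ℝ) < g/2 := by linarith
  rw [wick, wick, wick]
  rw [show hermiteP (n+2) (φ / Real.sqrt (2*g))
      = 2 * (φ / Real.sqrt (2*g)) * hermiteP (n+1) (φ / Real.sqrt (2*g))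
        - 2 * ((n:ℝ)+1) * hermiteP n (φ / Real.sqrt (2*g)) from rfl]
  have e1 : (((n+2:ℕ)):ℝ)/2 = (n:ℝ)/2 + 1 := by push_cast; ring
  have e2 : (((n+1:ℕ)):ℝ)/2 = (n:ℝ)/2 + (1:ℝ)/2 := by push_cast; ring
  rw [e1, e2, Real.rpow_add h2, Real.rpow_add h2, Real.rpow_one, ← Real.sqrt_eq_rpow]
  have key := sqrt_half_mul hg φ
  set s := (g/2) ^ ((n:ℝ)/2)
  set y := φ / Real.sqrt (2*g)
  set H1 := hermiteP (n+1) y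
  set H0 := hermiteP n y
  have hs : Real.sqrt (g/2) * Real.sqrt (g/2) = g/2 := Real.mul_self_sqrt h2.le
  linear_combination (s*Real.sqrt (g/2)*H1) * key - (2*y*s*H1) * hs

lemma wick_eq_W {g : ℝ} (hg : 0 < g) (n : ℕ) (φ : ℝ) : wick g n φ = W g n φ := by
  induction n using Nat.twoStepInduction with
  | zero => rw [wick_zero, W_zero]
  | one => rw [wick_one hg, W_one]
  | more n ih1 ih2 => rw [wick_rec hg, W_rec, ih1, ih2]

lemma W_scale (c b : ℝ) (n : ℕ) (x : ℝ) : W (c*b^2) n (b*x) = b^n * W c n x := by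
  rw [W, W, Finset.mul_sum]
  apply Finset.sum_congr rfl
  intro k _
  by_cases h : 2*k ≤ n
  · have hb : (b:ℝ)^n = b^(2*k) * b^(n-2*k) := by
      rw [← pow_add]; congr 1; omega
    rw [mul_pow b x, hb, show (-(c*b^2/2))^k = (-(c/2))^k * (b^2)^k by rw [← mul_pow]; ring_nf,
      ← pow_mul]
    ring
  · rw [A_eq_zero h]
    ring


lemma integrable_pow_gauss {b : ℝ} (hb : 0 < b) (n : ℕ) :
    Integrable fun x : ℝ => x^n * exp (-b*x^2) := by
  have := integrable_rpow_mul_exp_neg_mul_sq hb (s := (n:ℝ))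
    (lt_of_lt_of_le neg_one_lt_zero (Nat.cast_nonneg n))
  simpa [Real.rpow_natCast] using this

lemma Gamma_half (k : ℕ) :
    Real.Gamma ((k:ℝ) + 1/2) = Real.sqrt π * (2*k).factorial / (4^k * k.factorial) := by
  induction k with
  | zero =>
    simp only [Nat.cast_zero, zero_add, mul_zero, Nat.factorial_zero, pow_zero, Nat.cast_one]
    rw [Real.Gamma_one_half_eq]
    ring
  | succ k ih =>
    have h0 : ((k:ℝ) + 1/2) ≠ 0 := by positivity
    have : ((k+1 : ℕ):ℝ) + 1/2 = ((k:ℝ) + 1/2) + 1 := by push_cast; ring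
    rw [this, Real.Gamma_add_one h0, ih]
    rw [show 2*(k+1) = (2*k+1)+1 by ring, Nat.factorial_succ ((2*k+1)),
      Nat.factorial_succ (2*k), Nat.factorial_succ k]
    have h1 : (4:ℝ)^(k+1) = 4 * 4^k := by ring
    rw [h1]
    have hf : ((2*k).factorial : ℝ) ≠ 0 := Nat.cast_ne_zero.2 (Nat.factorial_ne_zero _)
    have hg : ((k).factorial : ℝ) ≠ 0 := Nat.cast_ne_zero.2 (Nat.factorial_ne_zero _)
    have h4 : (4:ℝ)^k ≠ 0 := by positivity
    push_cast
    field_simp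
    ring

lemma moment_even {b : ℝ} (hb : 0 < b) (k : ℕ) :
    ∫ x : ℝ, x^(2*k) * exp (-b*x^2)
      = Real.sqrt (π/b) * (2*k).factorial / (k.factorial * (4*b)^k) := by
  have habs : ∀ x : ℝ, |x|^(2*k) * exp (-b*|x|^2) = x^(2*k) * exp (-b*x^2) := by
    intro x
    rw [sq_abs, pow_mul, sq_abs, ← pow_mul]
  have h1 : (∫ x : ℝ, x^(2*k) * exp (-b*x^2))
      = 2 * ∫ x in Set.Ioi (0:ℝ), x^(2*k) * exp (-b*x^2) := by
    rw [← integral_comp_abs (f := fun x => x^(2*k) * exp (-b*x^2))]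
    congr 1 with x
    exact (habs x).symm
  have h2 : (∫ x in Set.Ioi (0:ℝ), x^(2*k) * exp (-b*x^2))
      = ∫ x in Set.Ioi (0:ℝ), x^((2*k : ℕ):ℝ) * exp (-b*x^((2:ℕ):ℝ)) := by
    apply setIntegral_congr_fun measurableSet_Ioi
    intro x _
    simp only [Real.rpow_natCast]
  have h3 := integral_rpow_mul_exp_neg_mul_rpow (p := ((2:ℕ):ℝ)) (q := ((2*k : ℕ):ℝ))
    (b := b) (by push_cast; norm_num)
    (lt_of_lt_of_le neg_one_lt_zero (Nat.cast_nonneg _)) hb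
  rw [h1, h2, h3]
  have e1 : (-(((2*k : ℕ):ℝ) + 1) / ((2:ℕ):ℝ)) = -(k:ℝ) + (-(1/2)) := by push_cast; ring
  have e2 : ((((2*k : ℕ):ℝ)) + 1) / ((2:ℕ):ℝ) = (k:ℝ) + 1/2 := by push_cast; ring
  rw [e1, e2, Gamma_half k, Real.rpow_add hb, Real.rpow_neg hb.le, Real.rpow_natCast,
    Real.rpow_neg hb.le, ← Real.sqrt_eq_rpow, Real.sqrt_div pi_pos.le, mul_pow]
  have hsb : Real.sqrt b ≠ 0 := ne_of_gt (Real.sqrt_pos.2 hb)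
  have hbk : (b:ℝ)^k ≠ 0 := by positivity
  have hf : ((k).factorial : ℝ) ≠ 0 := Nat.cast_ne_zero.2 (Nat.factorial_ne_zero _)
  have h4 : (4:ℝ)^k ≠ 0 := by positivity
  field_simp
  ring

lemma moment_odd {b : ℝ} (hb : 0 < b) (k : ℕ) :
    ∫ x : ℝ, x^(2*k+1) * exp (-b*x^2) = 0 := by
  set f : ℝ → ℝ := fun x => x^(2*k+1) * exp (-b*x^2) with hf
  have hint : Integrable f := integrable_pow_gauss hb (2*k+1)
  have hodd : ∀ x, f (-x) = - f x := by
    intro x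
    simp only [hf]
    rw [neg_pow, pow_succ, pow_mul, neg_sq, ← pow_mul, neg_sq]
    ring
  have hsplit : (∫ x, f x) = (∫ x in Set.Iic (0:ℝ), f x) + ∫ x in Set.Ioi (0:ℝ), f x := by
    rw [← setIntegral_union (Set.Iic_disjoint_Ioi le_rfl) measurableSet_Ioi
      hint.integrableOn hint.integrableOn, Set.Iic_union_Ioi, setIntegral_univ]
  have hneg : (∫ x in Set.Iic (0:ℝ), f x) = - ∫ x in Set.Ioi (0:ℝ), f x := by
    have := integral_comp_neg_Iic (0:ℝ) f
    rw [neg_zero] at this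
    rw [← this]
    rw [show (∫ x in Set.Iic (0:ℝ), f x) = ∫ x in Set.Iic (0:ℝ), - f (-x) by
      congr 1 with x; rw [hodd, neg_neg]]
    rw [integral_neg]
  rw [hsplit, hneg]
  ring

lemma sum_range_even_odd (M : ℕ) (f : ℕ → ℝ) :
    ∑ i ∈ range (2*M), f i = ∑ s ∈ range M, f (2*s) + ∑ s ∈ range M, f (2*s+1) := by
  induction M with
  | zero => simp
  | succ M ih =>
    rw [show 2*(M+1) = (2*M)+1+1 by ring, Finset.sum_range_succ, Finset.sum_range_succ, ih,
      Finset.sum_range_succ, Finset.sum_range_succ]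
    ring

lemma tri (M : ℕ) (f : ℕ → ℕ → ℝ) :
    ∑ r ∈ range M, ∑ k ∈ range (r+1), f k (r-k)
      = ∑ k ∈ range M, ∑ s ∈ range (M-k), f k s := by
  induction M with
  | zero => simp
  | succ M ih =>
    rw [Finset.sum_range_succ, ih]
    conv_rhs => rw [Finset.sum_range_succ]
    rw [show M+1-M = 1 by omega, Finset.sum_range_one]
    have h1 : ∑ k ∈ range M, ∑ s ∈ range (M+1-k), f k s
        = ∑ k ∈ range M, (∑ s ∈ range (M-k), f k s + f k (M-k)) := by
      apply Finset.sum_congr rfl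
      intro k hk
      rw [mem_range] at hk
      rw [show M+1-k = (M-k)+1 by omega, Finset.sum_range_succ]
    rw [h1, Finset.sum_add_distrib]
    have h2 : ∑ k ∈ range (M+1), f k (M-k) = ∑ k ∈ range M, f k (M-k) + f M (M-M) := by
      rw [Finset.sum_range_succ]
    rw [h2, show M-M = 0 by omega]
    ring

lemma expand_W (b c x : ℝ) (p : ℕ) (ζ : ℝ) :
    exp (-b*ζ^2) * W c p (ζ+x)
    = ∑ k ∈ range (p+1), ∑ i ∈ range ((p-2*k)+1),
        ((-(c/2))^k * A p k * (((p-2*k).choose i : ℕ) : ℝ) * x^(p-2*k-i))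
          * (ζ^i * exp (-b*ζ^2)) := by
  rw [W, Finset.mul_sum]
  apply Finset.sum_congr rfl
  intro k _
  rw [add_pow ζ x (p-2*k), Finset.mul_sum, Finset.mul_sum]
  apply Finset.sum_congr rfl
  intro i _
  ring

lemma integrable_exp_W {γ : ℝ} (hγ : 0 < γ) (c x : ℝ) (p : ℕ) :
    Integrable (fun ζ : ℝ => exp (-ζ^2/(2*γ)) * W c p (ζ+x)) := by
  have hb : (0:ℝ) < 1/(2*γ) := by positivity
  have he : ∀ ζ : ℝ, exp (-ζ^2/(2*γ)) = exp (-(1/(2*γ))*ζ^2) := by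
    intro ζ; congr 1; field_simp
  have : (fun ζ : ℝ => exp (-ζ^2/(2*γ)) * W c p (ζ+x))
      = fun ζ : ℝ => ∑ k ∈ range (p+1), ∑ i ∈ range ((p-2*k)+1),
        ((-(c/2))^k * A p k * (((p-2*k).choose i : ℕ) : ℝ) * x^(p-2*k-i))
          * (ζ^i * exp (-(1/(2*γ))*ζ^2)) := by
    funext ζ
    rw [he ζ, expand_W]
  rw [this]
  apply integrable_finset_sum
  intro k _
  apply integrable_finset_sum
  intro i _
  exact (integrable_pow_gauss hb i).const_mul _

lemma integral_W {γ : ℝ} (hγ : 0 < γ) (c x : ℝ) (p : ℕ) :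
    ∫ ζ : ℝ, exp (-ζ^2/(2*γ)) * W c p (ζ+x)
      = Real.sqrt (2*π*γ) * W (c-γ) p x := by
  have hb : (0:ℝ) < 1/(2*γ) := by positivity
  have he : ∀ ζ : ℝ, exp (-ζ^2/(2*γ)) = exp (-(1/(2*γ))*ζ^2) := by
    intro ζ; congr 1; field_simp
  -- integrate term by term
  have step1 : ∫ ζ : ℝ, exp (-ζ^2/(2*γ)) * W c p (ζ+x)
      = ∑ k ∈ range (p+1), ∑ i ∈ range ((p-2*k)+1),
        ((-(c/2))^k * A p k * (((p-2*k).choose i : ℕ) : ℝ) * x^(p-2*k-i))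
          * ∫ ζ : ℝ, ζ^i * exp (-(1/(2*γ))*ζ^2) := by
    rw [show (fun ζ : ℝ => exp (-ζ^2/(2*γ)) * W c p (ζ+x))
        = fun ζ : ℝ => ∑ k ∈ range (p+1), ∑ i ∈ range ((p-2*k)+1),
          ((-(c/2))^k * A p k * (((p-2*k).choose i : ℕ) : ℝ) * x^(p-2*k-i))
            * (ζ^i * exp (-(1/(2*γ))*ζ^2)) by
      funext ζ; rw [he ζ, expand_W]]
    rw [integral_finset_sum _ (fun k _ => integrable_finset_sum _
      (fun i _ => (integrable_pow_gauss hb i).const_mul _))]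
    apply Finset.sum_congr rfl
    intro k _
    rw [integral_finset_sum _ (fun i _ => (integrable_pow_gauss hb i).const_mul _)]
    apply Finset.sum_congr rfl
    intro i _
    rw [MeasureTheory.integral_const_mul]
  rw [step1]
  -- extend inner sums and split in even and odd parts
  have step2 : ∀ k, ∑ i ∈ range ((p-2*k)+1),
        ((-(c/2))^k * A p k * (((p-2*k).choose i : ℕ) : ℝ) * x^(p-2*k-i))
          * ∫ ζ : ℝ, ζ^i * exp (-(1/(2*γ))*ζ^2)
      = ∑ s ∈ range (p+1),
        ((-(c/2))^k * A p k * (((p-2*k).choose (2*s) : ℕ) : ℝ) * x^(p-2*k-2*s))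
          * (Real.sqrt (π/(1/(2*γ))) * (2*s).factorial / (s.factorial * (4*(1/(2*γ)))^s)) := by
    intro k
    have ext1 : ∑ i ∈ range ((p-2*k)+1),
          ((-(c/2))^k * A p k * (((p-2*k).choose i : ℕ) : ℝ) * x^(p-2*k-i))
            * ∫ ζ : ℝ, ζ^i * exp (-(1/(2*γ))*ζ^2)
        = ∑ i ∈ range (2*(p+1)),
          ((-(c/2))^k * A p k * (((p-2*k).choose i : ℕ) : ℝ) * x^(p-2*k-i))
            * ∫ ζ : ℝ, ζ^i * exp (-(1/(2*γ))*ζ^2) := by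
      apply Finset.sum_subset
      · apply Finset.range_subset_range.2; omega
      · intro i _ hi
        rw [mem_range, not_lt] at hi
        rw [Nat.choose_eq_zero_of_lt (by omega)]
        push_cast; ring
    rw [ext1, sum_range_even_odd]
    have odd0 : ∑ s ∈ range (p+1),
          ((-(c/2))^k * A p k * (((p-2*k).choose (2*s+1) : ℕ) : ℝ) * x^(p-2*k-(2*s+1)))
            * ∫ ζ : ℝ, ζ^(2*s+1) * exp (-(1/(2*γ))*ζ^2) = 0 := by
      apply Finset.sum_eq_zero
      intro s _
      rw [moment_odd hb s]
      ring
    rw [odd0, add_zero]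
    apply Finset.sum_congr rfl
    intro s _
    rw [moment_even hb s]
  simp only [step2]
  -- rhs expansion
  have hsq : Real.sqrt (π/(1/(2*γ))) = Real.sqrt (2*π*γ) := by
    congr 1; field_simp
  have h4b : (4*(1/(2*γ))) = 2/γ := by field_simp; ring
  rw [W]
  have rhs1 : Real.sqrt (2*π*γ) * ∑ r ∈ range (p+1), (-((c-γ)/2))^r * A p r * x^(p-2*r)
      = ∑ r ∈ range (p+1), ∑ j ∈ range (r+1),
          Real.sqrt (2*π*γ) * ((-(c/2))^j * (γ/2)^(r-j) * ((r.choose j : ℕ):ℝ))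
            * A p r * x^(p-2*r) := by
    rw [Finset.mul_sum]
    apply Finset.sum_congr rfl
    intro r _
    rw [show (-((c-γ)/2)) = (-(c/2)) + γ/2 by ring, add_pow, Finset.sum_mul, Finset.sum_mul,
      Finset.mul_sum]
    apply Finset.sum_congr rfl
    intro j _
    ring
  rw [rhs1]
  have rhs2 : ∑ r ∈ range (p+1), ∑ j ∈ range (r+1),
          Real.sqrt (2*π*γ) * ((-(c/2))^j * (γ/2)^(r-j) * ((r.choose j : ℕ):ℝ))
            * A p r * x^(p-2*r)
      = ∑ r ∈ range (p+1), ∑ j ∈ range (r+1),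
          (fun j s => Real.sqrt (2*π*γ) * ((-(c/2))^j * (γ/2)^s * (((j+s).choose j : ℕ):ℝ))
            * A p (j+s) * x^(p-2*(j+s))) j (r-j) := by
    apply Finset.sum_congr rfl
    intro r hr
    apply Finset.sum_congr rfl
    intro j hj
    rw [mem_range] at hr hj
    simp only []
    rw [show j + (r-j) = r by omega]
  have rhs3 := tri (p+1)
    (fun j s => Real.sqrt (2*π*γ) * ((-(c/2))^j * (γ/2)^s * (((j+s).choose j : ℕ):ℝ))
            * A p (j+s) * x^(p-2*(j+s)))
  rw [rhs2, rhs3]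
  -- match the two double sums
  apply Finset.sum_congr rfl
  intro k hk
  rw [mem_range] at hk
  have ext2 : ∑ s ∈ range (p+1-k),
        (fun j s => Real.sqrt (2*π*γ) * ((-(c/2))^j * (γ/2)^s * (((j+s).choose j : ℕ):ℝ))
            * A p (j+s) * x^(p-2*(j+s))) k s
      = ∑ s ∈ range (p+1),
        Real.sqrt (2*π*γ) * ((-(c/2))^k * (γ/2)^s * (((k+s).choose k : ℕ):ℝ))
            * A p (k+s) * x^(p-2*(k+s)) := by
    apply Finset.sum_subset
    · apply Finset.range_subset_range.2; omega
    · intro s _ hs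
      rw [mem_range, not_lt] at hs
      simp only []
      rw [A_eq_zero (by omega)]
      ring
  rw [ext2]
  apply Finset.sum_congr rfl
  intro s _
  rw [hsq, h4b]
  by_cases h : 2*(k+s) ≤ p
  · have e1 : p - 2*k - 2*s = p - 2*(k+s) := by omega
    have e2 : 2*s ≤ p - 2*k := by omega
    have e3 : 2*k ≤ p := by omega
    rw [e1, A_pos_def e3, A_pos_def h, Nat.cast_choose ℝ e2, Nat.cast_choose ℝ (by omega : k ≤ k+s)]
    rw [show p - 2*k - 2*s = p - 2*(k+s) by omega, show k+s-k = s by omega]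
    have f1 : ((p-2*k).factorial : ℝ) ≠ 0 := Nat.cast_ne_zero.2 (Nat.factorial_ne_zero _)
    have f2 : ((2*s).factorial : ℝ) ≠ 0 := Nat.cast_ne_zero.2 (Nat.factorial_ne_zero _)
    have f3 : ((p-2*(k+s)).factorial : ℝ) ≠ 0 := Nat.cast_ne_zero.2 (Nat.factorial_ne_zero _)
    have f4 : (s.factorial : ℝ) ≠ 0 := Nat.cast_ne_zero.2 (Nat.factorial_ne_zero _)
    have f5 : (k.factorial : ℝ) ≠ 0 := Nat.cast_ne_zero.2 (Nat.factorial_ne_zero _)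
    have f6 : ((k+s).factorial : ℝ) ≠ 0 := Nat.cast_ne_zero.2 (Nat.factorial_ne_zero _)
    have f7 : ((2:ℝ)/γ)^s ≠ 0 := by positivity
    have f8 : (γ:ℝ)^s ≠ 0 := by positivity
    have hgs : ((2:ℝ)/γ)^s = 2^s / γ^s := by rw [div_pow]
    rw [hgs]
    have hg2 : ((γ:ℝ)/2)^s = γ^s / 2^s := by rw [div_pow]
    rw [hg2]
    field_simp
  · rw [A_eq_zero (by omega : ¬ 2*(k+s) ≤ p)]
    by_cases h2 : 2*k ≤ p
    · rw [Nat.choose_eq_zero_of_lt (by omega : p-2*k < 2*s)]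
      push_cast; ring
    · rw [A_eq_zero h2]
      ring

end RG4

open RG4 in
/-- Under the hierarchical RG with `L^d = 2`, `F'(φ) = ∫ dμ_γ(ζ) F(ζ+βφ)²`, the Wick
expansion coefficients `a_l` of `F(φ) = Σ_l (a_l/γ̄^l) :φ^{2l}:_{γ̄}` (with
`γ̄ = γ/(1-β²)`) transform as `a'_l = β^{2l} Σ_{m,n} C_l^{mn} a_m a_n`. -/
theorem stmt4 (β γ : ℝ) (hβ0 : 0 < β) (hβ1 : β < 1) (hγ : 0 < γ)
    (gb : ℝ) (hgb : gb = γ / (1 - β ^ 2))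
    (N : ℕ) (a : ℕ → ℝ) (F : ℝ → ℝ)
    (hF : ∀ φ : ℝ, F φ = ∑ l ∈ range (N + 1), (a l / gb ^ l) * wick gb (2 * l) φ) :
    ∀ φ : ℝ,
      (2 * π * γ) ^ (-(1 : ℝ) / 2) *
        ∫ ζ : ℝ, exp (-ζ ^ 2 / (2 * γ)) * (F (ζ + β * φ)) ^ 2
      = ∑ l ∈ range (2 * N + 1),
          ((β ^ (2 * l) *
              ∑ m ∈ range (N + 1), ∑ n ∈ range (N + 1), Ccoef l m n * a m * a n) /
            gb ^ l) * wick gb (2 * l) φ := by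
  intro φ
  have h1β : 0 < 1 - β^2 := by nlinarith
  have hgb0 : 0 < gb := by rw [hgb]; positivity
  have hγeq : γ = gb * (1-β^2) := by rw [hgb]; field_simp
  have hsub : gb - γ = gb * β^2 := by rw [hγeq]; ring
  have hFW : ∀ y : ℝ, F y = ∑ l ∈ range (N+1), (a l / gb^l) * W gb (2*l) y := by
    intro y
    rw [hF y]
    exact Finset.sum_congr rfl fun l _ => by rw [wick_eq_W hgb0]
  have key : ∀ ζ : ℝ, exp (-ζ^2/(2*γ)) * (F (ζ + β*φ))^2
      = ∑ m ∈ range (N+1), ∑ n ∈ range (N+1), ∑ k ∈ range (2*m+1),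
          ((a m / gb^m) * (a n / gb^n) * (D (2*n) (2*m) k * gb^k))
            * (exp (-ζ^2/(2*γ)) * W gb (2*m+(2*n)-2*k) (ζ+β*φ)) := by
    intro ζ
    rw [show (F (ζ + β*φ))^2 = (∑ l ∈ range (N+1), (a l / gb^l) * W gb (2*l) (ζ+β*φ))
        * (∑ l ∈ range (N+1), (a l / gb^l) * W gb (2*l) (ζ+β*φ)) by rw [hFW]; ring]
    rw [Finset.sum_mul_sum, Finset.mul_sum]
    apply Finset.sum_congr rfl; intro m _
    rw [Finset.mul_sum]
    apply Finset.sum_congr rfl; intro n _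
    have e : (a m / gb^m) * W gb (2*m) (ζ+β*φ) * ((a n / gb^n) * W gb (2*n) (ζ+β*φ))
        = (a m / gb^m) * (a n / gb^n) * (W gb (2*m) (ζ+β*φ) * W gb (2*n) (ζ+β*φ)) := by
      ring
    rw [e, W_prod gb (ζ+β*φ) (2*n) (2*m), Finset.mul_sum, Finset.mul_sum]
    apply Finset.sum_congr rfl; intro k _
    ring
  simp only [key]
  rw [integral_finset_sum _ (fun m _ => integrable_finset_sum _
    (fun n _ => integrable_finset_sum _
    (fun k _ => ((integrable_exp_W hγ gb (β*φ) _).const_mul _))))]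
  have hint : ∀ m n k : ℕ,
      (∫ ζ : ℝ, ((a m / gb^m) * (a n / gb^n) * (D (2*n) (2*m) k * gb^k))
        * (exp (-ζ^2/(2*γ)) * W gb (2*m+(2*n)-2*k) (ζ+β*φ)))
      = Real.sqrt (2*π*γ) * (((a m / gb^m) * (a n / gb^n) * (D (2*n) (2*m) k * gb^k))
          * (β^(2*m+(2*n)-2*k) * W gb (2*m+(2*n)-2*k) φ)) := by
    intro m n k
    rw [MeasureTheory.integral_const_mul, integral_W hγ, hsub, W_scale]
    ring
  rw [Finset.sum_congr rfl (fun m _ => integral_finset_sum _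
    (fun n _ => integrable_finset_sum _
    (fun k _ => ((integrable_exp_W hγ gb (β*φ) _).const_mul _))))]
  rw [Finset.sum_congr rfl (fun m _ => Finset.sum_congr rfl
    (fun n _ => integral_finset_sum _
    (fun k _ => ((integrable_exp_W hγ gb (β*φ) _).const_mul _))))]
  simp only [hint]
  have swap1 : ∀ m ∈ range (N+1), (∑ n ∈ range (N+1), ∑ k ∈ range (2*m+1),
      Real.sqrt (2*π*γ) * (((a m / gb^m) * (a n / gb^n) * (D (2*n) (2*m) k * gb^k))
          * (β^(2*m+(2*n)-2*k) * W gb (2*m+(2*n)-2*k) φ)))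
      = Real.sqrt (2*π*γ) * ∑ n ∈ range (N+1), ∑ k ∈ range (2*m+1),
        (((a m / gb^m) * (a n / gb^n) * (D (2*n) (2*m) k * gb^k))
          * (β^(2*m+(2*n)-2*k) * W gb (2*m+(2*n)-2*k) φ)) := by
    intro m _
    rw [Finset.mul_sum]
    apply Finset.sum_congr rfl; intro n _
    rw [Finset.mul_sum]
  rw [Finset.sum_congr rfl swap1, ← Finset.mul_sum, ← mul_assoc]
  have hconst : (2*π*γ)^(-(1:ℝ)/2) * Real.sqrt (2*π*γ) = 1 := by
    rw [Real.sqrt_eq_rpow, ← Real.rpow_add (by positivity)]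
    norm_num
  rw [hconst, one_mul]
  -- now rewrite the RHS
  have rhsW : ∑ l ∈ range (2*N+1),
        ((β^(2*l) * ∑ m ∈ range (N+1), ∑ n ∈ range (N+1), Ccoef l m n * a m * a n) / gb^l)
          * wick gb (2*l) φ
      = ∑ m ∈ range (N+1), ∑ n ∈ range (N+1), ∑ l ∈ range (2*N+1),
          Ccoef l m n * a m * a n * β^(2*l) / gb^l * W gb (2*l) φ := by
    have e1 : ∀ l ∈ range (2*N+1),
        ((β^(2*l) * ∑ m ∈ range (N+1), ∑ n ∈ range (N+1), Ccoef l m n * a m * a n) / gb^l)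
          * wick gb (2*l) φ
        = ∑ m ∈ range (N+1), ∑ n ∈ range (N+1),
            Ccoef l m n * a m * a n * β^(2*l) / gb^l * W gb (2*l) φ := by
      intro l _
      rw [wick_eq_W hgb0, Finset.mul_sum, Finset.sum_div, Finset.sum_mul]
      apply Finset.sum_congr rfl; intro m _
      rw [Finset.mul_sum, Finset.sum_div, Finset.sum_mul]
      apply Finset.sum_congr rfl; intro n _
      ring
    rw [Finset.sum_congr rfl e1, Finset.sum_comm]
    apply Finset.sum_congr rfl; intro m _
    rw [Finset.sum_comm]
  rw [rhsW]
  -- match per (m,n)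
  apply Finset.sum_congr rfl; intro m hm
  apply Finset.sum_congr rfl; intro n hn
  rw [mem_range] at hm hn
  set f : ℕ → ℝ := fun k => ((a m / gb^m) * (a n / gb^n) * (D (2*n) (2*m) k * gb^k))
      * (β^(2*m+(2*n)-2*k) * W gb (2*m+(2*n)-2*k) φ) with hfdef
  have fzero : ∀ k, m+n < k → f k = 0 := by
    intro k hk
    have : (2*m).choose k = 0 ∨ (2*n).choose k = 0 := by
      rcases le_or_gt k (2*m) with h | h
      · right; exact Nat.choose_eq_zero_of_lt (by omega)
      · left; exact Nat.choose_eq_zero_of_lt h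
    rcases this with h | h <;>
      simp [hfdef, D, h]
  have ext1 : ∑ k ∈ range (2*m+1), f k = ∑ k ∈ range (2*m+(2*n)+1), f k := by
    apply Finset.sum_subset (Finset.range_subset_range.2 (by omega))
    intro k _ hk
    rw [mem_range, not_lt] at hk
    have : (2*m).choose k = 0 := Nat.choose_eq_zero_of_lt (by omega)
    simp [hfdef, D, this]
  have ext2 : ∑ k ∈ range (m+n+1), f k = ∑ k ∈ range (2*m+(2*n)+1), f k := by
    apply Finset.sum_subset (Finset.range_subset_range.2 (by omega))
    intro k _ hk
    rw [mem_range, not_lt] at hk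
    exact fzero k (by omega)
  have refl1 : ∑ k ∈ range (m+n+1), f k = ∑ l ∈ range (m+n+1), f (m+n-l) := by
    rw [← Finset.sum_range_reflect]
    apply Finset.sum_congr rfl; intro l hl
    rw [mem_range] at hl
    congr 1
    all_goals omega
  have ext3 : ∑ l ∈ range (2*N+1), Ccoef l m n * a m * a n * β^(2*l) / gb^l * W gb (2*l) φ
      = ∑ l ∈ range (m+n+1), Ccoef l m n * a m * a n * β^(2*l) / gb^l * W gb (2*l) φ := by
    symm
    apply Finset.sum_subset (Finset.range_subset_range.2 (by omega))
    intro l _ hl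
    rw [mem_range, not_lt] at hl
    have : Ccoef l m n = 0 := by
      rw [Ccoef, if_neg]
      intro ⟨_, _, h3⟩
      omega
    rw [this]
    ring
  rw [ext1, ← ext2, refl1, ext3]
  apply Finset.sum_congr rfl; intro l hl
  rw [mem_range] at hl
  -- pointwise identity for l ≤ m+n
  by_cases htri : m ≤ n + l ∧ n ≤ m + l
  · have hk2m : m+n-l ≤ 2*m := by omega
    have hk2n : m+n-l ≤ 2*n := by omega
    have hidx : 2*m+(2*n)-2*(m+n-l) = 2*l := by omega
    have hCc : Ccoef l m n = ((2*m).factorial : ℝ) * ((2*n).factorial)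
        / (((m+n-l).factorial) * ((l+n-m).factorial) * ((l+m-n).factorial)) := by
      rw [Ccoef, if_pos ⟨htri.1, htri.2, by omega⟩]
    have hD : D (2*n) (2*m) (m+n-l) = ((2*m).factorial : ℝ) * ((2*n).factorial)
        / (((m+n-l).factorial) * ((l+m-n).factorial) * ((l+n-m).factorial)) := by
      rw [D, Nat.cast_choose ℝ hk2m, Nat.cast_choose ℝ hk2n,
        show 2*m - (m+n-l) = l+m-n by omega, show 2*n - (m+n-l) = l+n-m by omega]
      have q1 : ((m+n-l).factorial : ℝ) ≠ 0 := Nat.cast_ne_zero.2 (Nat.factorial_ne_zero _)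
      have q2 : ((l+m-n).factorial : ℝ) ≠ 0 := Nat.cast_ne_zero.2 (Nat.factorial_ne_zero _)
      have q3 : ((l+n-m).factorial : ℝ) ≠ 0 := Nat.cast_ne_zero.2 (Nat.factorial_ne_zero _)
      field_simp
    have hpow : gb^(m+n-l) * gb^l = gb^m * gb^n := by
      rw [← pow_add, ← pow_add]
      congr 1
      omega
    simp only [hfdef]
    rw [hidx, hD, hCc]
    have q1 : ((m+n-l).factorial : ℝ) ≠ 0 := Nat.cast_ne_zero.2 (Nat.factorial_ne_zero _)
    have q2 : ((l+m-n).factorial : ℝ) ≠ 0 := Nat.cast_ne_zero.2 (Nat.factorial_ne_zero _)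
    have q3 : ((l+n-m).factorial : ℝ) ≠ 0 := Nat.cast_ne_zero.2 (Nat.factorial_ne_zero _)
    have qg : gb ≠ 0 := ne_of_gt hgb0
    have qgm : gb^m ≠ 0 := pow_ne_zero _ qg
    have qgn : gb^n ≠ 0 := pow_ne_zero _ qg
    have qgl : gb^l ≠ 0 := pow_ne_zero _ qg
    field_simp
    linear_combination (a m * a n * W gb (2*l) φ) * hpow
  · have hCc : Ccoef l m n = 0 := by
      rw [Ccoef, if_neg]
      intro ⟨h1, h2, _⟩
      exact htri ⟨h1, h2⟩
    have hch : (2*m).choose (m+n-l) = 0 ∨ (2*n).choose (m+n-l) = 0 := by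
      rcases Nat.lt_or_ge (n+l) m with h | h
      · right; exact Nat.choose_eq_zero_of_lt (by omega)
      · left
        apply Nat.choose_eq_zero_of_lt
        omega
    rw [hCc]
    rcases hch with h | h <;> simp [hfdef, D, h]
end

section
/- The linearized RG matrix U(a) with entries U_{nl}(a) = 2β^{2l} Σ_m C_l^{mn} a_m is symmetric with respect to the weighted inner product, i.e., the matrix T with T_{nl} = (β^{2n}/(2n)!) U_{nl}(a) satisfies T_{nl} = T_{ln}; consequently all eigenvalues of U(a) are real. -/
open Finset

lemma Ccoef_div (l m n : ℕ) :
    Ccoef l m n / (Nat.factorial (2 * n) : ℝ)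
      = Ccoef n m l / (Nat.factorial (2 * l) : ℝ) := by
  unfold Ccoef
  by_cases h : m ≤ n + l ∧ n ≤ m + l ∧ l ≤ m + n
  · rw [if_pos h, if_pos (by omega : m ≤ l + n ∧ l ≤ m + n ∧ n ≤ m + l)]
    have e1 : n + l - m = l + n - m := by omega
    have e2 : n + m - l = m + n - l := by omega
    have e3 : l + m - n = m + l - n := by omega
    rw [e1, e2, e3]
    have f1 : ((2 * n).factorial : ℝ) ≠ 0 := by positivity
    have f2 : ((2 * l).factorial : ℝ) ≠ 0 := by positivity
    have f3 : ((m + n - l).factorial : ℝ) ≠ 0 := by positivity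
    have f4 : ((l + n - m).factorial : ℝ) ≠ 0 := by positivity
    have f5 : ((m + l - n).factorial : ℝ) ≠ 0 := by positivity
    field_simp
  · rw [if_neg h, if_neg (by omega : ¬(m ≤ l + n ∧ l ≤ m + n ∧ n ≤ m + l))]
    simp

/-- The linearized RG matrix `U(a)` with `U_{nl} = 2β^{2l} Σ_m C_l^{mn} a_m` becomes
symmetric after the weighting `T_{nl} = (β^{2n}/(2n)!) U_{nl}`; consequently all
eigenvalues of `U(a)` are real. -/
theorem stmt6 (β : ℝ) (hβ : 0 < β) (lmax : ℕ) (a : Fin (lmax + 1) → ℝ)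
    (U T : Matrix (Fin (lmax + 1)) (Fin (lmax + 1)) ℝ)
    (hU : ∀ n l, U n l = 2 * β ^ (2 * (l : ℕ)) * ∑ m : Fin (lmax + 1), Ccoef (l : ℕ) (m : ℕ) (n : ℕ) * a m)
    (hT : ∀ n l, T n l = (β ^ (2 * (n : ℕ)) / (Nat.factorial (2 * (n : ℕ)))) * U n l) :
    (∀ n l, T n l = T l n) ∧
    (∀ μ : ℂ, Module.End.HasEigenvalue
        (Matrix.toLin' (U.map (Complex.ofReal : ℝ → ℂ))) μ → μ.im = 0) := by
  set d : Fin (lmax + 1) → ℝ :=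
    fun n => β ^ (2 * (n : ℕ)) / (Nat.factorial (2 * (n : ℕ)) : ℝ) with hd_def
  have hdpos : ∀ n, 0 < d n := by
    intro n
    have : (0:ℝ) < (Nat.factorial (2 * (n : ℕ)) : ℝ) := by positivity
    positivity
  have hTsym : ∀ n l, T n l = T l n := by
    intro n l
    rw [hT n l, hT l n, hU n l, hU l n]
    simp only [Finset.mul_sum]
    apply Finset.sum_congr rfl
    intro m _
    have key := Ccoef_div (l : ℕ) (m : ℕ) (n : ℕ)
    have f1 : ((2 * (n:ℕ)).factorial : ℝ) ≠ 0 := by positivity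
    have f2 : ((2 * (l:ℕ)).factorial : ℝ) ≠ 0 := by positivity
    field_simp at key ⊢
    linear_combination (a m) * key
  refine ⟨hTsym, ?_⟩
  have hkey : ∀ n l, d n * U n l = d l * U l n := by
    intro n l
    have := hTsym n l
    rw [hT n l, hT l n] at this
    exact this
  intro μ hμ
  obtain ⟨v, hv⟩ := hμ.exists_hasEigenvector
  have hv0 : v ≠ 0 := hv.2
  have hMv : (U.map (Complex.ofReal : ℝ → ℂ)).mulVec v = μ • v := by
    have := hv.apply_eq_smul
    simpa [Matrix.toLin'_apply] using this
  set S : ℂ := ∑ n, (d n : ℂ) * (starRingEnd ℂ) (v n)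
      * ((U.map (Complex.ofReal : ℝ → ℂ)).mulVec v n) with hS_def
  set P : ℝ := ∑ n, d n * Complex.normSq (v n) with hP_def
  have hSP : S = μ * (P : ℂ) := by
    rw [hS_def, hMv]
    push_cast [hP_def, Finset.mul_sum]
    apply Finset.sum_congr rfl
    intro n _
    have : (starRingEnd ℂ) (v n) * v n = (Complex.normSq (v n) : ℂ) := by
      rw [mul_comm, Complex.mul_conj]
    simp only [Pi.smul_apply, smul_eq_mul]
    calc (d n : ℂ) * (starRingEnd ℂ) (v n) * (μ * v n)
        = μ * ((d n : ℂ) * ((starRingEnd ℂ) (v n) * v n)) := by ring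
      _ = μ * ((d n : ℂ) * (Complex.normSq (v n) : ℂ)) := by rw [this]
  have hSdouble : S = ∑ n, ∑ l, (d n : ℂ) * (starRingEnd ℂ) (v n)
      * ((U n l : ℂ) * v l) := by
    rw [hS_def]
    apply Finset.sum_congr rfl
    intro n _
    simp [Matrix.mulVec, dotProduct, Matrix.map_apply, Finset.mul_sum, mul_assoc]
  have hSconj : (starRingEnd ℂ) S = S := by
    rw [hSdouble]
    simp only [map_sum, map_mul, Complex.conj_conj, Complex.conj_ofReal]
    rw [Finset.sum_comm]
    apply Finset.sum_congr rfl
    intro l _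
    apply Finset.sum_congr rfl
    intro n _
    have hc : ((d l : ℝ) : ℂ) * ((U l n : ℝ) : ℂ) = ((d n : ℝ) : ℂ) * ((U n l : ℝ) : ℂ) := by
      have h2 : ((d l * U l n : ℝ) : ℂ) = ((d n * U n l : ℝ) : ℂ) := by
        exact_mod_cast congrArg Complex.ofReal (hkey l n)
      push_cast at h2
      exact h2
    linear_combination (-(v n * (starRingEnd ℂ) (v l))) * hc
  have hPpos : 0 < P := by
    obtain ⟨n₀, hn₀⟩ := Function.ne_iff.mp hv0
    rw [hP_def]
    apply Finset.sum_pos'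
    · intro i _
      have := (hdpos i).le
      have := Complex.normSq_nonneg (v i)
      positivity
    · refine ⟨n₀, Finset.mem_univ _, ?_⟩
      have h1 := hdpos n₀
      have h2 : 0 < Complex.normSq (v n₀) := by
        simpa [Complex.normSq_pos] using hn₀
      positivity
  have hSim : S.im = 0 := by
    have := congrArg Complex.im hSconj
    simp only [Complex.conj_im] at this
    linarith
  have : μ.im * P = 0 := by
    have h := congrArg Complex.im hSP
    simp only [Complex.mul_im, Complex.ofReal_re, Complex.ofReal_im, mul_zero,
      add_zero] at h
    rw [hSim] at h
    linarith
  exact (mul_eq_zero.mp this).resolve_right (ne_of_gt hPpos)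
end

section
/- Let the first-order fixed point equation of the ε-expansion be derived from β^{−2l} a_l = Σ_{m,n} C_l^{mn} a_m a_n with a_l^{(0)} = δ_{l,0} and β^{−2l} = 2^{l/l*} Σ_m (β^{−2l})^{(m)} ε^m. Then the first-order coefficients satisfy a_l^{(1)} = α·δ_{l,l*} with α = 2(β^{−2l*})^{(1)} / C_{l*}^{l* l*}. -/
open Finset

lemma Ccoef_zero_right (l m : ℕ) : Ccoef l m 0 = if m = l then 1 else 0 := by
  unfold Ccoef
  by_cases h : m = l
  · subst h
    rw [if_pos ⟨by omega, by omega, by omega⟩, if_pos rfl]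
    have h1 : m + 0 - m = 0 := by omega
    have h2 : m + m - 0 = m + m := by omega
    have h3 : ((m + m).factorial : ℝ) ≠ 0 := by
      exact_mod_cast Nat.factorial_ne_zero _
    rw [h1, h2]
    simp only [Nat.mul_zero, Nat.factorial_zero, Nat.cast_one, mul_one, one_mul]
    rw [two_mul]
    exact div_self h3
  · rw [if_neg (by omega), if_neg h]

lemma Ccoef_zero_left (l n : ℕ) : Ccoef l 0 n = if n = l then 1 else 0 := by
  unfold Ccoef
  by_cases h : n = l
  · subst h
    rw [if_pos ⟨by omega, by omega, by omega⟩, if_pos rfl]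
    have h1 : 0 + n - n = 0 := by omega
    have h2 : n + 0 - n = 0 := by omega
    have h3 : n + n - 0 = n + n := by omega
    have h4 : ((n + n).factorial : ℝ) ≠ 0 := by
      exact_mod_cast Nat.factorial_ne_zero _
    rw [h1, h2, h3]
    simp only [Nat.mul_zero, Nat.factorial_zero, Nat.cast_one, mul_one, one_mul]
    rw [two_mul]
    exact div_self h4
  · rw [if_neg (by omega), if_neg h]

lemma Ccoef_diag_pos (l : ℕ) : 0 < Ccoef l l l := by
  unfold Ccoef
  have h : l ≤ l + l ∧ l ≤ l + l ∧ l ≤ l + l := ⟨by omega, by omega, by omega⟩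
  rw [if_pos h]
  positivity

/-- First order of the ε-expansion of the fixed point equation
`β^{-2l} a_l = Σ_{m,n} C_l^{mn} a_m a_n` with `a_l^{(0)} = δ_{l,0}`: the nontrivial
branch has `a_l^{(1)} = α δ_{l,l*}` with `α = 2(β^{-2l*})^{(1)}/C_{l*}^{l*l*}`. -/
theorem stmt10 (lstar : ℕ) (hl : 2 ≤ lstar)
    (b : ℕ → ℕ → ℝ) (hb0 : ∀ l, b l 0 = 1) (hbzero : ∀ m, 0 < m → b 0 m = 0)
    (hbne : b lstar 1 ≠ 0)
    (a : ℕ → ℕ → ℝ) (hsupp : ∀ k, (Function.support (fun l => a l k)).Finite)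
    (ha0 : ∀ l, a l 0 = if l = 0 then 1 else 0)
    (hnt : a lstar 1 ≠ 0)
    (heq : ∀ l N : ℕ, (2 : ℝ) ^ ((l : ℝ) / lstar) * ∑ k ∈ range (N + 1), b l (N - k) * a l k
      = ∑ k ∈ range (N + 1), ∑ᶠ m, ∑ᶠ n, Ccoef l m n * a m (N - k) * a n k) :
    ∀ l, a l 1 = if l = lstar then 2 * b lstar 1 / Ccoef lstar lstar lstar else 0 := by
  have hlpos : 0 < lstar := by omega
  -- the `k = last` term: a_n^{(0)} = δ_{n,0}
  have e1 : ∀ l j, (∑ᶠ m, ∑ᶠ n, Ccoef l m n * a m j * a n 0) = a l j := by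
    intro l j
    have h1 : ∀ m, (∑ᶠ n, Ccoef l m n * a m j * a n 0) = Ccoef l m 0 * a m j := by
      intro m
      rw [finsum_eq_single _ 0]
      · rw [ha0]; simp
      · intro n hn; rw [ha0]; simp [hn]
    rw [finsum_congr h1, finsum_eq_single _ l]
    · rw [Ccoef_zero_right]; simp
    · intro m hm; rw [Ccoef_zero_right]; simp [hm]
  have e2 : ∀ l j, (∑ᶠ m, ∑ᶠ n, Ccoef l m n * a m 0 * a n j) = a l j := by
    intro l j
    rw [finsum_eq_single _ 0]
    · rw [finsum_eq_single (fun n => Ccoef l 0 n * a 0 0 * a n j) l]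
      · rw [Ccoef_zero_left, ha0]; simp
      · intro n hn; rw [Ccoef_zero_left]; simp [hn]
    · intro m hm
      have : ∀ n, Ccoef l m n * a m 0 * a n j = 0 := by
        intro n; rw [ha0]; simp [hm]
      rw [finsum_congr this, finsum_zero]
  -- the first order equation
  have key1 : ∀ l : ℕ, (2 : ℝ) ^ ((l : ℝ) / lstar) * (b l 1 * a l 0 + a l 1)
      = a l 1 + a l 1 := by
    intro l
    have h := heq l 1
    simp only [Finset.sum_range_succ, Finset.sum_range_zero, zero_add,
      Nat.sub_self, Nat.sub_zero, hb0 l, one_mul] at h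
    rw [e1 l 1, e2 l 1] at h
    exact h
  -- a l 1 = 0 for l ≠ lstar
  have step1 : ∀ l, l ≠ lstar → a l 1 = 0 := by
    intro l hlne
    by_cases h0 : l = 0
    · subst h0
      have h := key1 0
      rw [ha0, hbzero 1 (by omega)] at h
      norm_num at h
      linarith
    · have h := key1 l
      rw [ha0, if_neg h0] at h
      norm_num at h
      by_contra hne
      have h2 : (2 : ℝ) ^ ((l : ℝ) / lstar) = 2 := by
        have h3 : (2 : ℝ) ^ ((l : ℝ) / lstar) * a l 1 = 2 * a l 1 := by linarith
        exact mul_right_cancel₀ hne h3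
      have hx : ((l : ℝ) / lstar) ≠ 1 := by
        intro hc
        apply hlne
        have : (l : ℝ) = lstar := by
          field_simp at hc
          exact_mod_cast hc
        exact_mod_cast this
      rcases lt_or_gt_of_ne hx with hlt | hgt
      · have := (Real.rpow_lt_rpow_left_iff (x := (2:ℝ)) (by norm_num)).mpr hlt
        rw [h2, Real.rpow_one] at this
        exact lt_irrefl _ this
      · have := (Real.rpow_lt_rpow_left_iff (x := (2:ℝ)) (by norm_num)).mpr hgt
        rw [h2, Real.rpow_one] at this
        exact lt_irrefl _ this
  -- second order equation at lstar
  have hdiv1 : ((lstar : ℝ) / lstar) = 1 := by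
    field_simp
  have h2 := heq lstar 2
  simp only [Finset.sum_range_succ, Finset.sum_range_zero, zero_add] at h2
  norm_num at h2
  rw [hdiv1, Real.rpow_one] at h2
  rw [e1 lstar 2, hb0, ha0, if_neg (by omega : lstar ≠ 0)] at h2
  -- the middle term: ∑ᶠ m, ∑ᶠ n, Ccoef lstar m n * a m 1 * a n 1
  have emid : (∑ᶠ m, ∑ᶠ n, Ccoef lstar m n * a m 1 * a n 1)
      = Ccoef lstar lstar lstar * a lstar 1 * a lstar 1 := by
    rw [finsum_eq_single _ lstar]
    · rw [finsum_eq_single _ lstar]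
      intro n hn; rw [step1 n hn]; ring
    · intro m hm
      have : ∀ n, Ccoef lstar m n * a m 1 * a n 1 = 0 := by
        intro n; rw [step1 m hm]; ring
      rw [finsum_congr this, finsum_zero]
  rw [emid, e2 lstar 2] at h2
  -- now h2 : 2 * (b lstar 2 * 0 + b lstar 1 * a lstar 1 + a lstar 2)
  --        = a lstar 2 + C * α * α + a lstar 2
  have halpha : a lstar 1 = 2 * b lstar 1 / Ccoef lstar lstar lstar := by
    have hCpos := Ccoef_diag_pos lstar
    have hCne : Ccoef lstar lstar lstar ≠ 0 := ne_of_gt hCpos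
    have hkey : 2 * b lstar 1 = Ccoef lstar lstar lstar * a lstar 1 := by
      have h3 : (2 * b lstar 1) * a lstar 1
          = (Ccoef lstar lstar lstar * a lstar 1) * a lstar 1 := by nlinarith [h2]
      exact mul_right_cancel₀ hnt h3
    field_simp
    linarith [hkey]
  intro l
  by_cases h : l = lstar
  · subst h; rw [if_pos rfl]; exact halpha
  · rw [if_neg h]; exact step1 l h
end
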